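/- arXiv:1302.2774 — 7 statements merged into one kernel-verified Lean document; each statement's English description precedes it below -/
import Mathlib

section
/- Let E be a closed symmetric monoidal category and T₁, T₂ : E ⥤ E functors equipped with tensorial strengths σ₁, σ₂, with corresponding E-enrichments φ₁, φ₂ under the bijection between strengths and enrichments. A natural transformation Ψ : T₁ ⟶ T₂ is strong, i.e. Ψ_{X⊗A} ∘ (σ₁)_{X,A} = (σ₂)_{X,A} ∘ (id_X ⊗ Ψ_A) for all objects X, A, if and only if it is E-natural, i.e. [id_{T₁(A)}, Ψ_B] ∘ (φ₁)_{A,B} = [Ψ_A, id_{T₂(B)}] ∘ (φ₂)_{A,B} : [A,B] ⟶ [T₁(A), T₂(B)] for all objects A, B. -/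
open CategoryTheory MonoidalCategory MonoidalClosed Limits

universe v u

namespace PaperMorita

variable {C : Type u} [Category.{v} C] [MonoidalCategory C] [SymmetricCategory C]
  [MonoidalClosed C]

/-- The transpose of `f : X ⊗ A ⟶ B` under the adjunction `- ⊗ A ⊣ [A,-]`
(obtained from Mathlib's `tensorLeft` adjunction via the symmetry). -/
noncomputable def rcurry {X A B : C} (f : X ⊗ A ⟶ B) : X ⟶ (ihom A).obj B :=
  MonoidalClosed.curry ((β_ A X).hom ≫ f)

/-- The inverse transpose of `g : X ⟶ [A,B]`, a morphism `X ⊗ A ⟶ B`. -/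
noncomputable def runcurry {X A B : C} (g : X ⟶ (ihom A).obj B) : X ⊗ A ⟶ B :=
  (β_ X A).hom ≫ MonoidalClosed.uncurry g

/-- The evaluation morphism `ev_A : [A,B] ⊗ A ⟶ B`. -/
noncomputable def ev (A B : C) : (((ihom A).obj B) ⊗ A) ⟶ B :=
  (β_ _ _).hom ≫ (ihom.ev A).app B

/-- The coevaluation morphism `γ_A : X ⟶ [A, X ⊗ A]`, adjoint to the identity of `X ⊗ A`. -/
noncomputable def coev (A X : C) : X ⟶ (ihom A).obj (X ⊗ A) :=
  rcurry (𝟙 (X ⊗ A))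

/-- The unit morphism `j_A : I ⟶ [A,A]`. -/
noncomputable def junit (A : C) : 𝟙_ C ⟶ (ihom A).obj A :=
  rcurry (λ_ A).hom

/-- The internal composition morphism `c : [B,D] ⊗ [A,B] ⟶ [A,D]`, characterized by
`ev ∘ (c ⊗ id) = ev ∘ (id ⊗ ev)`. -/
noncomputable def icomp (A B D : C) : (((ihom B).obj D) ⊗ ((ihom A).obj B)) ⟶ ((ihom A).obj D) :=
  rcurry ((α_ _ _ _).hom ≫ (_ ◁ ev A B) ≫ ev B D)

/-- A tensorial strength for an endofunctor `T`, in the sense of Kock: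
a natural family `σ_{X,Y} : X ⊗ T(Y) ⟶ T(X ⊗ Y)` satisfying the unit and
associativity axioms. -/
structure Strength (T : C ⥤ C) where
  σ : ∀ X Y : C, X ⊗ T.obj Y ⟶ T.obj (X ⊗ Y)
  naturality_left : ∀ {X X' : C} (f : X ⟶ X') (Y : C),
    (f ▷ T.obj Y) ≫ σ X' Y = σ X Y ≫ T.map (f ▷ Y)
  naturality_right : ∀ (X : C) {Y Y' : C} (f : Y ⟶ Y'),
    (X ◁ T.map f) ≫ σ X Y' = σ X Y ≫ T.map (X ◁ f)
  unit : ∀ Y : C, σ (𝟙_ C) Y ≫ T.map (λ_ Y).hom = (λ_ (T.obj Y)).hom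
  assoc : ∀ X Y Z : C,
    (α_ X Y (T.obj Z)).hom ≫ (X ◁ σ Y Z) ≫ σ X (Y ⊗ Z)
      = σ (X ⊗ Y) Z ≫ T.map (α_ X Y Z).hom

/-- An `E`-enrichment of an endofunctor `T` of the closed symmetric monoidal category `E`:
a natural family `φ_{A,B} : [A,B] ⟶ [T(A),T(B)]` satisfying the unit and composition
axioms and inducing the action of `T` on morphisms under `E(A,B) ≅ E(I,[A,B])`. -/
structure Enrichment (T : C ⥤ C) where
  φ : ∀ A B : C, ((ihom A).obj B) ⟶ ((ihom (T.obj A)).obj (T.obj B))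
  naturality_right : ∀ (A : C) {B B' : C} (g : B ⟶ B'),
    φ A B ≫ (ihom (T.obj A)).map (T.map g) = (ihom A).map g ≫ φ A B'
  naturality_left : ∀ {A' A : C} (f : A' ⟶ A) (B : C),
    φ A B ≫ (MonoidalClosed.pre (T.map f)).app (T.obj B)
      = (MonoidalClosed.pre f).app B ≫ φ A' B
  unit : ∀ A : C, junit A ≫ φ A A = junit (T.obj A)
  comp : ∀ A B D : C,
    icomp A B D ≫ φ A D = (φ B D ⊗ₘ φ A B) ≫ icomp (T.obj A) (T.obj B) (T.obj D)
  induces : ∀ {A B : C} (f : A ⟶ B),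
    rcurry ((λ_ A).hom ≫ f) ≫ φ A B = rcurry ((λ_ (T.obj A)).hom ≫ T.map f)


section Lemmas

variable {T : C ⥤ C}

lemma runcurry_rcurry {X A B : C} (f : X ⊗ A ⟶ B) : runcurry (rcurry f) = f := by
  simp [runcurry, rcurry, ← Category.assoc]

lemma rcurry_runcurry {X A B : C} (g : X ⟶ (ihom A).obj B) : rcurry (runcurry g) = g := by
  simp [runcurry, rcurry, ← Category.assoc]

lemma runcurry_injective {X A B : C} {f g : X ⟶ (ihom A).obj B}
    (h : runcurry f = runcurry g) : f = g := by
  rw [← rcurry_runcurry f, ← rcurry_runcurry g, h]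

lemma rcurry_injective {X A B : C} {f g : X ⊗ A ⟶ B} (h : rcurry f = rcurry g) : f = g := by
  rw [← runcurry_rcurry f, ← runcurry_rcurry g, h]

lemma whisker_ev {X A B : C} (h : X ⟶ (ihom A).obj B) :
    (h ▷ A) ≫ ev A B = runcurry h := by
  simp [ev, runcurry, MonoidalClosed.uncurry_eq,
    BraidedCategory.braiding_naturality_left_assoc]

lemma runcurry_natural_right {X A B B' : C} (h : X ⟶ (ihom A).obj B) (g : B ⟶ B') :
    runcurry (h ≫ (ihom A).map g) = runcurry h ≫ g := by
  simp [runcurry, MonoidalClosed.uncurry_natural_right]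

lemma runcurry_natural_left {X X' A B : C} (f : X ⟶ X') (h : X' ⟶ (ihom A).obj B) :
    runcurry (f ≫ h) = (f ▷ A) ≫ runcurry h := by
  simp [runcurry, MonoidalClosed.uncurry_natural_left,
    BraidedCategory.braiding_naturality_left_assoc]

lemma runcurry_pre {X A' B' Y : C} (h : X ⟶ (ihom B').obj Y) (f : A' ⟶ B') :
    runcurry (h ≫ (MonoidalClosed.pre f).app Y) = (X ◁ f) ≫ runcurry h := by
  simp only [runcurry, MonoidalClosed.uncurry_eq, MonoidalCategory.whiskerLeft_comp,
    Category.assoc, MonoidalClosed.id_tensor_pre_app_comp_ev]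
  rw [whisker_exchange_assoc, ← BraidedCategory.braiding_naturality_right_assoc]

lemma runcurry_coev (A X : C) : runcurry (coev A X) = 𝟙 (X ⊗ A) :=
  runcurry_rcurry _

end Lemmas

/-- The enrichment family associated to a tensorial strength:
`φ_{A,B}` is adjoint to `T(ev_A) ∘ σ_{[A,B],A}`. -/
noncomputable def strengthToEnrichmentHom {T : C ⥤ C} (S : Strength T) (A B : C) :
    ((ihom A).obj B) ⟶ ((ihom (T.obj A)).obj (T.obj B)) :=
  rcurry (S.σ ((ihom A).obj B) A ≫ T.map (ev A B))

/-- Recovering the strength from its enrichment. -/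
lemma recover_strength (S : Strength T) (X A : C) :
    ((coev A X ≫ strengthToEnrichmentHom S A (X ⊗ A)) ▷ T.obj A)
      ≫ ev (T.obj A) (T.obj (X ⊗ A)) = S.σ X A := by
  rw [whisker_ev, runcurry_natural_left, strengthToEnrichmentHom, runcurry_rcurry,
    ← Category.assoc, S.naturality_left (coev A X) A, Category.assoc, ← T.map_comp, whisker_ev,
    runcurry_coev, T.map_id, Category.comp_id]


/-- The strength family associated to an enrichment family `φ`:
`σ_{X,A} = ev_{T(A)} ∘ ((φ_{A,X⊗A} ∘ γ_A) ⊗ id_{T(A)})`. -/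
noncomputable def enrichmentToStrengthHom {T : C ⥤ C}
    (φ : ∀ A B : C, ((ihom A).obj B) ⟶ ((ihom (T.obj A)).obj (T.obj B))) (X A : C) :
    X ⊗ T.obj A ⟶ T.obj (X ⊗ A) :=
  ((coev A X ≫ φ A (X ⊗ A)) ▷ T.obj A) ≫ ev (T.obj A) (T.obj (X ⊗ A))

/-- Let `T₁, T₂` be endofunctors of a closed symmetric monoidal category,
equipped with tensorial strengths `σ₁, σ₂` whose corresponding enrichments are `φ₁, φ₂`.
A natural transformation `Ψ : T₁ ⟶ T₂` is strong, i.e.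
`Ψ_{X⊗A} ∘ (σ₁)_{X,A} = (σ₂)_{X,A} ∘ (id_X ⊗ Ψ_A)`, if and only if it is `E`-natural, i.e.
`[id_{T₁(A)}, Ψ_B] ∘ (φ₁)_{A,B} = [Ψ_A, id_{T₂(B)}] ∘ (φ₂)_{A,B}`. -/
theorem strong_iff_enriched_natural (T₁ T₂ : C ⥤ C) (S₁ : Strength T₁) (S₂ : Strength T₂)
    (Ψ : T₁ ⟶ T₂) :
    (∀ X A : C, S₁.σ X A ≫ Ψ.app (X ⊗ A) = (X ◁ Ψ.app A) ≫ S₂.σ X A) ↔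
    (∀ A B : C,
      strengthToEnrichmentHom S₁ A B ≫ (ihom (T₁.obj A)).map (Ψ.app B)
        = strengthToEnrichmentHom S₂ A B ≫ (MonoidalClosed.pre (Ψ.app A)).app (T₂.obj B)) := by
  constructor
  · intro hs A B
    apply runcurry_injective
    rw [runcurry_natural_right, runcurry_pre, strengthToEnrichmentHom,
      strengthToEnrichmentHom, runcurry_rcurry, runcurry_rcurry, Category.assoc,
      Ψ.naturality, ← Category.assoc, hs, Category.assoc]
  · intro he X A
    rw [← recover_strength S₁ X A, ← recover_strength S₂ X A, whisker_ev, whisker_ev,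
      ← runcurry_natural_right, Category.assoc, he A (X ⊗ A),
      ← Category.assoc, runcurry_pre, runcurry_natural_left]


end PaperMorita
end

section
/- Let E be a closed symmetric monoidal category and T₁, T₂ : E ⥤ E functors with tensorial strengths σ₁, σ₂ corresponding to E-enrichments φ₁, φ₂. Then the composite strength on T₂ ∘ T₁ given by (σ_{2,1})_{X,A} = T₂((σ₁)_{X,A}) ∘ (σ₂)_{X,T₁(A)} : X ⊗ T₂T₁(A) ⟶ T₂T₁(X ⊗ A) corresponds, under the bijection between tensorial strengths and E-enrichments, to the composite enrichment (φ₂)_{T₁(A),T₁(B)} ∘ (φ₁)_{A,B} : [A,B] ⟶ [T₂T₁(A), T₂T₁(B)]. -/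
open CategoryTheory MonoidalCategory MonoidalClosed Limits

universe v u

namespace PaperMorita

variable {C : Type u} [Category.{v} C] [MonoidalCategory C] [SymmetricCategory C]
  [MonoidalClosed C]

lemma rcurry_whisker_ev {X A B : C} (f : X ⊗ A ⟶ B) :
    (MonoidalClosed.curry ((β_ A X).hom ≫ f) ▷ A) ≫ ev A B = f := by
  unfold ev
  rw [← Category.assoc, BraidedCategory.braiding_naturality_left, Category.assoc,
    ← MonoidalClosed.uncurry_eq, MonoidalClosed.uncurry_curry, ← Category.assoc,
    SymmetricCategory.symmetry, Category.id_comp]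

/-- For endofunctors `T₁, T₂` with tensorial strengths `σ₁, σ₂`, the
composite strength `(σ_{2,1})_{X,A} = T₂((σ₁)_{X,A}) ∘ (σ₂)_{X,T₁(A)}` on `T₂ ∘ T₁`
corresponds, under the bijection between strengths and enrichments, to the composite
enrichment `(φ₂)_{T₁(A),T₁(B)} ∘ (φ₁)_{A,B}`. -/
theorem composite_strength_corresponds_to_composite_enrichment
    (T₁ T₂ : C ⥤ C) (S₁ : Strength T₁) (S₂ : Strength T₂) (A B : C) :
    rcurry ((S₂.σ ((ihom A).obj B) (T₁.obj A) ≫ T₂.map (S₁.σ ((ihom A).obj B) A))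
        ≫ T₂.map (T₁.map (ev A B)))
      = strengthToEnrichmentHom S₁ A B
          ≫ strengthToEnrichmentHom S₂ (T₁.obj A) (T₁.obj B) := by
  apply MonoidalClosed.uncurry_injective
  rw [MonoidalClosed.uncurry_natural_left]
  simp only [strengthToEnrichmentHom, rcurry, MonoidalClosed.uncurry_curry]
  have hnat : ∀ {X X' : C} (f : X ⟶ X') (Y : C) {Z : C} (h : T₂.obj (X' ⊗ Y) ⟶ Z),
      (f ▷ T₂.obj Y) ≫ S₂.σ X' Y ≫ h = S₂.σ X Y ≫ T₂.map (f ▷ Y) ≫ h := by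
    intro X X' f Y Z h
    rw [← Category.assoc, S₂.naturality_left, Category.assoc]
  conv_rhs => rw [← Category.assoc, BraidedCategory.braiding_naturality_right,
    Category.assoc, hnat, ← T₂.map_comp, rcurry_whisker_ev]
  simp [Category.assoc]

end PaperMorita
end

section
/- Let (T, μ, η, σ) be a strong monad on a monoidal category E with unit object I. Then T(I) is a monoid in E with unit η_I : I ⟶ T(I) and multiplication given by the composite μ_I ∘ T(ρ_{T(I)}) ∘ σ_{T(I),I} : T(I) ⊗ T(I) ⟶ T(T(I) ⊗ I) ⟶ T(T(I)) ⟶ T(I). -/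
open CategoryTheory MonoidalCategory Limits

universe v u

namespace PaperMorita

variable {C : Type u} [Category.{v} C] [MonoidalCategory C]

/-- The two compatibilities of a tensorial strength with the unit and the multiplication
of a monad, which make `(T, μ, η, σ)` a strong monad in the sense of Kock. -/
def IsStrongMonadStrength (M : Monad C) (S : Strength (M : C ⥤ C)) : Prop :=
  (∀ X Y : C, (X ◁ M.η.app Y) ≫ S.σ X Y = M.η.app (X ⊗ Y)) ∧
  (∀ X Y : C, (X ◁ M.μ.app Y) ≫ S.σ X Y
      = S.σ X ((M : C ⥤ C).obj Y) ≫ (M : C ⥤ C).map (S.σ X Y) ≫ M.μ.app (X ⊗ Y))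

/-- The object `T(I)` underlying the endomorphism monoid of a strong monad. -/
def TIobj (M : Monad C) : C := (M : C ⥤ C).obj (𝟙_ C)

/-- The unit `η_I : I ⟶ T(I)` of the endomorphism monoid of a strong monad. -/
def TIone (M : Monad C) : 𝟙_ C ⟶ TIobj M := M.η.app (𝟙_ C)

/-- The multiplication `μ_I ∘ T(ρ_{T(I)}) ∘ σ_{T(I),I} : T(I) ⊗ T(I) ⟶ T(I)` of the
endomorphism monoid of a strong monad. -/
def TImul (M : Monad C) (S : Strength (M : C ⥤ C)) : TIobj M ⊗ TIobj M ⟶ TIobj M :=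
  S.σ (TIobj M) (𝟙_ C) ≫ (M : C ⥤ C).map (ρ_ (TIobj M)).hom ≫ M.μ.app (𝟙_ C)

/-- Let `(T, μ, η, σ)` be a strong monad on a monoidal category with unit
object `I`.  Then `T(I)` is a monoid with unit `η_I` and multiplication
`μ_I ∘ T(ρ_{T(I)}) ∘ σ_{T(I),I}`. -/
theorem TI_is_monoid (M : Monad C) (S : Strength (M : C ⥤ C))
    (hS : IsStrongMonadStrength M S) :
    (TIone M ▷ TIobj M) ≫ TImul M S = (λ_ (TIobj M)).hom ∧
    (TIobj M ◁ TIone M) ≫ TImul M S = (ρ_ (TIobj M)).hom ∧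
    (TImul M S ▷ TIobj M) ≫ TImul M S
      = (α_ (TIobj M) (TIobj M) (TIobj M)).hom ≫ (TIobj M ◁ TImul M S) ≫ TImul M S := by
  obtain ⟨hη, hμ⟩ := hS
  refine ⟨?_, ?_, ?_⟩
  · -- left unit
    simp only [TImul, TIone, TIobj]
    rw [← Category.assoc, S.naturality_left, Category.assoc, ← Functor.map_comp_assoc,
      rightUnitor_naturality, Functor.map_comp, Category.assoc, Monad.right_unit]
    simp only [Functor.id_obj, Category.comp_id]
    rw [← unitors_equal, S.unit]
  · -- right unit
    simp only [TImul, TIone, TIobj]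
    rw [← Category.assoc, hη, ← M.η.naturality_assoc]
    simp
  · -- associativity
    simp only [TImul, TIobj, MonoidalCategory.comp_whiskerRight,
      MonoidalCategory.whiskerLeft_comp, Category.assoc]
    -- LHS rewriting
    slice_lhs 3 4 => rw [S.naturality_left]
    slice_lhs 2 3 => rw [S.naturality_left]
    slice_lhs 1 2 => rw [S.naturality_left]
    slice_lhs 4 5 => rw [← Functor.map_comp, rightUnitor_naturality, Functor.map_comp]
    slice_lhs 3 4 => rw [← Functor.map_comp, rightUnitor_naturality, Functor.map_comp]
    slice_lhs 2 3 => rw [← Functor.map_comp, rightUnitor_naturality, Functor.map_comp]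
    slice_lhs 5 6 => rw [M.assoc]
    -- RHS rewriting
    slice_rhs 4 5 => rw [hμ]
    slice_rhs 3 4 => rw [S.naturality_right]
    slice_rhs 1 3 => rw [S.assoc]
    slice_rhs 2 3 => rw [← Functor.map_comp, whiskerLeft_rightUnitor, Iso.hom_inv_id_assoc]
    slice_rhs 4 5 => rw [← M.μ.naturality]
    simp only [Functor.comp_map, Category.assoc]

end PaperMorita
end

section
/- Let E be a closed symmetric monoidal category with equalizers, (T, μ, η) a monad on E whose underlying functor carries an E-enrichment φ, and let (X, ξ_X) and (Y, ξ_Y) be T-algebras. Let i : A(X,Y) ⟶ [X,Y] be the equalizer of the two morphisms [X,Y] ⟶ [T(X),Y] given by [T(X), ξ_Y] ∘ φ_{X,Y} and [ξ_X, Y]. Then morphisms I ⟶ A(X,Y) in E correspond bijectively, by composing with i and applying the bijection E(I,[X,Y]) ≅ E(X,Y), to morphisms of T-algebras (X, ξ_X) ⟶ (Y, ξ_Y). -/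
open CategoryTheory MonoidalCategory MonoidalClosed Limits

universe v u

namespace PaperMorita

variable {C : Type u} [Category.{v} C] [MonoidalCategory C] [SymmetricCategory C]
  [MonoidalClosed C]

section Helpers

/-- "Name" of a morphism: `I ⟶ [A,B]`. -/
noncomputable def nm {A B : C} (f : A ⟶ B) : 𝟙_ C ⟶ (ihom A).obj B :=
  rcurry ((λ_ A).hom ≫ f)

/-- Morphism from a name. -/
noncomputable def un {A B : C} (h : 𝟙_ C ⟶ (ihom A).obj B) : A ⟶ B :=
  (λ_ A).inv ≫ runcurry h

lemma un_nm {A B : C} (f : A ⟶ B) : un (nm f) = f := by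
  simp [un, nm, rcurry, runcurry]

lemma nm_un {A B : C} (h : 𝟙_ C ⟶ (ihom A).obj B) : nm (un h) = h := by
  simp [un, nm, rcurry, runcurry]

lemma un_map {A B B' : C} (h : 𝟙_ C ⟶ (ihom A).obj B) (g : B ⟶ B') :
    un (h ≫ (ihom A).map g) = un h ≫ g := by
  simp [un, runcurry, MonoidalClosed.uncurry_natural_right]

lemma un_pre {A' A B : C} (h : 𝟙_ C ⟶ (ihom A).obj B) (f : A' ⟶ A) :
    un (h ≫ (MonoidalClosed.pre f).app B) = f ≫ un h := by
  simp only [un, runcurry, MonoidalClosed.uncurry_natural_left,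
    MonoidalClosed.uncurry_eq]
  simp only [MonoidalCategory.whiskerLeft_comp_assoc,
    MonoidalClosed.id_tensor_pre_app_comp_ev]
  rw [whisker_exchange_assoc, ← BraidedCategory.braiding_naturality_right_assoc]
  simp

lemma un_phi {T : C ⥤ C} (E : Enrichment T) {A B : C}
    (h : 𝟙_ C ⟶ (ihom A).obj B) :
    un (h ≫ E.φ A B) = T.map (un h) := by
  have := E.induces (un h)
  rw [show rcurry ((λ_ A).hom ≫ un h) = h from nm_un h] at this
  rw [this]
  exact un_nm _

end Helpers

/-- Let `(T, μ, η)` be a monad on a closed symmetric monoidal category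
with equalizers, whose underlying functor carries an `E`-enrichment `φ`, and let
`(X, ξ_X)`, `(Y, ξ_Y)` be `T`-algebras.  If `i : A(X,Y) ⟶ [X,Y]` is the equalizer of
`[T(X), ξ_Y] ∘ φ_{X,Y}` and `[ξ_X, Y]`, then morphisms `I ⟶ A(X,Y)` correspond
bijectively (by composing with `i` and applying `E(I,[X,Y]) ≅ E(X,Y)`) to morphisms of
`T`-algebras `(X, ξ_X) ⟶ (Y, ξ_Y)`. -/
theorem algebra_homs_as_equalizer (M : Monad C) (E : Enrichment (M : C ⥤ C))
    (X Y : M.Algebra) (AXY : C) (i : AXY ⟶ (ihom X.A).obj Y.A)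
    (w : i ≫ (E.φ X.A Y.A ≫ (ihom ((M : C ⥤ C).obj X.A)).map Y.a)
        = i ≫ (MonoidalClosed.pre X.a).app Y.A)
    (hl : IsLimit (Fork.ofι i w)) :
    ∃ e : (𝟙_ C ⟶ AXY) ≃ (X ⟶ Y),
      ∀ g : 𝟙_ C ⟶ AXY, (e g).f = (λ_ X.A).inv ≫ runcurry (g ≫ i) := by
  have un_inj : ∀ {h h' : 𝟙_ C ⟶ (ihom ((M : C ⥤ C).obj X.A)).obj Y.A},
      un h = un h' → h = h' := by
    intro h h' e
    rw [← nm_un h, ← nm_un h', e]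
  -- `un` of the two parallel maps
  have key₁ : ∀ h : 𝟙_ C ⟶ (ihom X.A).obj Y.A,
      un (h ≫ (E.φ X.A Y.A ≫ (ihom ((M : C ⥤ C).obj X.A)).map Y.a))
        = (M : C ⥤ C).map (un h) ≫ Y.a := by
    intro h
    rw [← Category.assoc, un_map, un_phi]
  have key₂ : ∀ h : 𝟙_ C ⟶ (ihom X.A).obj Y.A,
      un (h ≫ (MonoidalClosed.pre X.a).app Y.A) = X.a ≫ un h := by
    intro h
    exact un_pre h X.a
  -- forward map
  have halg : ∀ g : 𝟙_ C ⟶ AXY,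
      (M : C ⥤ C).map (un (g ≫ i)) ≫ Y.a = X.a ≫ un (g ≫ i) := by
    intro g
    have hw : (g ≫ i) ≫ (E.φ X.A Y.A ≫ (ihom ((M : C ⥤ C).obj X.A)).map Y.a)
        = (g ≫ i) ≫ (MonoidalClosed.pre X.a).app Y.A := by
      rw [Category.assoc, Category.assoc, w]
    rw [← key₁ (g ≫ i), hw, key₂]
  -- backward map
  have bwd : ∀ f : X ⟶ Y, { l : 𝟙_ C ⟶ AXY // l ≫ i = nm f.f } := by
    intro f
    refine Fork.IsLimit.lift' hl (nm f.f) ?_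
    apply un_inj
    rw [key₁, key₂, un_nm, f.h]
  refine ⟨⟨fun g => ⟨un (g ≫ i), halg g⟩, fun f => (bwd f).1, ?_, ?_⟩, ?_⟩
  · intro g
    apply Fork.IsLimit.hom_ext hl
    rw [Fork.ι_ofι] at *
    rw [(bwd _).2]
    show nm (un (g ≫ i)) = g ≫ i
    exact nm_un _
  · intro f
    ext
    show un ((bwd f).1 ≫ i) = f.f
    rw [(bwd f).2, un_nm]
  · intro g
    rfl

end PaperMorita
end

section
/- Let T be a monad on a cocomplete category C. Then the Eilenberg–Moore category Alg_T of T-algebras is cocomplete if and only if it has reflexive coequalizers. -/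
open CategoryTheory Limits

universe v u

namespace PaperMorita

section Aux

variable {C : Type u} [Category.{v} C] {T : Monad C}
variable {J : Type*} [Category J]

/-- The "top" natural transformation of the pointwise Beck pair. -/
noncomputable def beckPairTop (X : J ⥤ T.Algebra) :
    (X ⋙ (T.forget ⋙ T.free)) ⋙ (T.forget ⋙ T.free) ⟶ X ⋙ (T.forget ⋙ T.free) :=
  Functor.whiskerRight (Functor.whiskerLeft X (Monad.adj T).counit) (T.forget ⋙ T.free)

/-- The "bottom" natural transformation of the pointwise Beck pair. -/
noncomputable def beckPairBot (X : J ⥤ T.Algebra) :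
    (X ⋙ (T.forget ⋙ T.free)) ⋙ (T.forget ⋙ T.free) ⟶ X ⋙ (T.forget ⋙ T.free) :=
  Functor.whiskerLeft (X ⋙ (T.forget ⋙ T.free)) (Monad.adj T).counit

/-- The pointwise Beck cofork. -/
noncomputable def beckPairπ (X : J ⥤ T.Algebra) :
    X ⋙ (T.forget ⋙ T.free) ⟶ X :=
  Functor.whiskerLeft X (Monad.adj T).counit

theorem beckPair_condition (X : J ⥤ T.Algebra) :
    beckPairTop X ≫ beckPairπ X = beckPairBot X ≫ beckPairπ X := by
  ext j
  have := congrArg Monad.Algebra.Hom.f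
    ((Monad.adj T).counit.naturality ((Monad.adj T).counit.app (X.obj j)))
  simp [beckPairTop, beckPairBot, beckPairπ] at this ⊢
  exact this

end Aux

/-- Let `T` be a monad on a cocomplete category `C`.  Then the
Eilenberg–Moore category of `T`-algebras is cocomplete if and only if it has reflexive
coequalizers. -/
theorem algebra_cocomplete_iff_hasReflexiveCoequalizers
    {C : Type u} [Category.{v} C] [HasColimits C] (T : Monad C) :
    HasColimits T.Algebra ↔ HasReflexiveCoequalizers T.Algebra := by
  constructor
  · intro h; infer_instance
  · intro h
    refine ⟨fun J _ => ?_⟩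
    rw [hasColimitsOfShape_iff_isRightAdjoint_const]
    -- the whiskered free ⊣ forget adjunction
    letI adj₁ := (Monad.adj T).whiskerRight J
    -- each counit component of the whiskered adjunction is a regular epi
    haveI : ∀ X : J ⥤ T.Algebra, RegularEpi (adj₁.counit.app X) := by
      intro X
      have hεeq : adj₁.counit.app X = beckPairπ X := by
        ext j
        simp [adj₁, beckPairπ, Adjunction.whiskerRight]
        exact Category.comp_id _
      rw [hεeq]
      refine ⟨_, beckPairTop X, beckPairBot X, beckPair_condition X, ?_⟩
      -- `beckPairπ X` is the coequalizer: check pointwise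
      apply evaluationJointlyReflectsColimits
      intro j
      refine (IsColimit.equivOfNatIsoOfIso
        ((parallelPair.ext (Iso.refl _) (Iso.refl _) ?_ ?_ :
          parallelPair (Monad.FreeCoequalizer.topMap (X.obj j))
              (Monad.FreeCoequalizer.bottomMap (X.obj j)) ≅
            parallelPair (beckPairTop X) (beckPairBot X) ⋙ (evaluation J T.Algebra).obj j))
        (Monad.beckAlgebraCofork (X.obj j))
        (((evaluation J T.Algebra).obj j).mapCocone
          (Cofork.ofπ (beckPairπ X) (beckPair_condition X))) ?_)
        (Monad.beckAlgebraCoequalizer (X.obj j))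
      · simp [beckPairTop, Monad.FreeCoequalizer.topMap]
        exact (Category.comp_id _).trans (Category.id_comp _).symm
      · simp [beckPairBot, Monad.FreeCoequalizer.bottomMap]
        ext
        exact (Category.comp_id _).trans (Category.id_comp _).symm
      · exact Cocones.ext (Iso.refl _) (by rintro (_ | _) <;> ext <;> simp [beckPairπ, beckPairTop, Monad.adj_counit]; exacts [(by show (𝟙 _ ≫ T.map (X.obj j).a ≫ (X.obj j).a) ≫ 𝟙 _ = T.map (X.obj j).a ≫ ((Monad.adj T).counit.app (X.obj j)).f; simp), (by show (𝟙 _ ≫ (X.obj j).a) ≫ 𝟙 _ = ((Monad.adj T).counit.app (X.obj j)).f; simp)])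
    -- `const J ⋙ whisker forget` is a right adjoint
    haveI : ((Functor.const J : T.Algebra ⥤ _) ⋙
        (Functor.whiskeringRight J T.Algebra C).obj T.forget).IsRightAdjoint := by
      haveI : (Functor.const J : C ⥤ _).IsRightAdjoint :=
        (hasColimitsOfShape_iff_isRightAdjoint_const).mp inferInstance
      haveI : (T.forget ⋙ (Functor.const J : C ⥤ _)).IsRightAdjoint := inferInstance
      refine ((Adjunction.ofIsRightAdjoint
        (T.forget ⋙ (Functor.const J : C ⥤ _))).ofNatIsoRight ?_).isRightAdjoint
      exact NatIso.ofComponents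
        (fun A => NatIso.ofComponents (fun j => Iso.refl _) (by aesop_cat)) (by intros; ext; simp; exact (Category.id_comp _).symm)
    exact isRightAdjoint_triangle_lift (Functor.const J) adj₁ ‹∀ X : J ⥤ T.Algebra, RegularEpi (adj₁.counit.app X)›

end PaperMorita
end

section
/- Let S and T be monads on a category C and φ : S ⟶ T a morphism of monads, and suppose that the Eilenberg–Moore category Alg_T of T-algebras has reflexive coequalizers. Then the restriction functor G : Alg_T ⟶ Alg_S, sending a T-algebra (X, ξ) to the S-algebra (X, ξ ∘ φ_X), has a left adjoint; for an S-algebra (X, ξ_X), its value is the reflexive coequalizer in Alg_T of the pair F_T(ξ_X) and μ_X ∘ T(φ_X) : F_T(S(X)) ⇉ F_T(X), with common section F_T(η^S_X). -/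
open CategoryTheory Limits

universe v u

namespace PaperMorita

variable {C : Type u} [Category.{v} C]

/-- For a morphism of monads `φ : S ⟶ T` and an `S`-algebra `(X, ξ_X)`, the morphism of
free `T`-algebras `F_T(S(X)) ⟶ F_T(X)` whose underlying morphism is
`μ_X ∘ T(φ_X) : T(S(X)) ⟶ T(T(X)) ⟶ T(X)`. -/
def restrictionPairSnd {S T : Monad C} (φ : S ⟶ T) (X : S.Algebra) :
    T.free.obj ((S : C ⥤ C).obj X.A) ⟶ T.free.obj X.A where
  f := (T : C ⥤ C).map (φ.app X.A) ≫ T.μ.app X.A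
  h := by
    dsimp only [Monad.free]
    rw [Functor.map_comp, Category.assoc, Monad.assoc, ← Category.assoc,
      ← Functor.comp_map, T.μ.naturality, Category.assoc]

section

variable {S T : Monad C} (φ : S ⟶ T)

theorem sec_fst (X : S.Algebra) :
    T.free.map (S.η.app X.A) ≫ T.free.map X.a = 𝟙 (T.free.obj X.A) := by
  rw [← Functor.map_comp, X.unit]
  exact T.free.map_id X.A

theorem sec_snd (X : S.Algebra) :
    T.free.map (S.η.app X.A) ≫ restrictionPairSnd φ X = 𝟙 (T.free.obj X.A) := by
  ext
  dsimp [restrictionPairSnd]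
  erw [← Category.assoc, ← Functor.map_comp, φ.app_η, Monad.right_unit]
  rfl

theorem hasCoeq (X : S.Algebra) [HasReflexiveCoequalizers T.Algebra] :
    HasCoequalizer (T.free.map X.a) (restrictionPairSnd φ X) :=
  hasCoequalizer_of_common_section _ (T.free.map (S.η.app X.A))
    (sec_fst (T := T) X) (sec_snd φ X)

variable [HasReflexiveCoequalizers T.Algebra]

attribute [local instance] hasCoeq

/-- The value of the left adjoint on objects. -/
noncomputable def Fobj (X : S.Algebra) : T.Algebra :=
  coequalizer (T.free.map X.a) (restrictionPairSnd φ X)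

/-- For `k : X ⟶ G Y`, the induced algebra map `F_T(X) ⟶ Y`. -/
def liftHom {X : S.Algebra} {Y : T.Algebra}
    (k : X ⟶ (Monad.algebraFunctorOfMonadHom φ).obj Y) : T.free.obj X.A ⟶ Y where
  f := (T : C ⥤ C).map k.f ≫ Y.a
  h := by
    dsimp only [Monad.free]
    erw [Functor.map_comp, Category.assoc, ← Y.assoc, ← Category.assoc,
      ← Functor.comp_map, Category.assoc]
    exact T.μ.naturality_assoc k.f Y.a

theorem liftHom_w {X : S.Algebra} {Y : T.Algebra}
    (k : X ⟶ (Monad.algebraFunctorOfMonadHom φ).obj Y) :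
    T.free.map X.a ≫ liftHom φ k = restrictionPairSnd φ X ≫ liftHom φ k := by
  ext
  have hk := k.h
  change (S : C ⥤ C).map k.f ≫ φ.app Y.A ≫ Y.a = X.a ≫ k.f at hk
  dsimp [liftHom, restrictionPairSnd]
  have h1 : T.μ.app X.A ≫ (T : C ⥤ C).map k.f =
      (T : C ⥤ C).map ((T : C ⥤ C).map k.f) ≫ T.μ.app Y.A := by
    have := T.μ.naturality k.f
    dsimp at this
    exact this.symm
  have h2 : (S : C ⥤ C).map k.f ≫ φ.app Y.A = φ.app X.A ≫ (T : C ⥤ C).map k.f :=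
    φ.toNatTrans.naturality k.f
  conv_lhs => erw [← Category.assoc, ← Functor.map_comp, ← hk, Functor.map_comp,
    Functor.map_comp, Category.assoc, Category.assoc, ← Y.assoc]
  conv_rhs => erw [Category.assoc, reassoc_of% h1, ← Category.assoc ((T : C ⥤ C).map (φ.app X.A)),
    ← Category.assoc, ← Functor.map_comp,
    ← h2, Functor.map_comp, Category.assoc, Category.assoc]
  rfl

theorem toFun_h {X : S.Algebra} {Y : T.Algebra} (p : (T : C ⥤ C).obj X.A ⟶ Y.A)
    (hg : (T : C ⥤ C).map p ≫ Y.a = T.μ.app X.A ≫ p)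
    (hw : (T : C ⥤ C).map X.a ≫ p =
      ((T : C ⥤ C).map (φ.app X.A) ≫ T.μ.app X.A) ≫ p) :
    (S : C ⥤ C).map (T.η.app X.A ≫ p) ≫ (φ.app Y.A ≫ Y.a) =
      X.a ≫ (T.η.app X.A ≫ p) := by
  have e1 : X.a ≫ T.η.app X.A = T.η.app _ ≫ (T : C ⥤ C).map X.a := by
    have := T.η.naturality X.a; dsimp at this; exact this
  have e2 : φ.app X.A ≫ T.η.app ((T : C ⥤ C).obj X.A) =
      T.η.app _ ≫ (T : C ⥤ C).map (φ.app X.A) := by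
    have := T.η.naturality (φ.app X.A); dsimp at this; exact this
  have lhs : X.a ≫ (T.η.app X.A ≫ p) = φ.app X.A ≫ p := by
    rw [← Category.assoc, e1, Category.assoc, hw, Category.assoc,
      ← Category.assoc (T.η.app _), ← e2, Category.assoc]
    simp
  have e3 : (S : C ⥤ C).map p ≫ φ.app Y.A = φ.app _ ≫ (T : C ⥤ C).map p :=
    φ.toNatTrans.naturality p
  have e4 : (S : C ⥤ C).map (T.η.app X.A) ≫ φ.app ((T : C ⥤ C).obj X.A) =
      φ.app X.A ≫ (T : C ⥤ C).map (T.η.app X.A) :=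
    φ.toNatTrans.naturality (T.η.app X.A)
  have rhs : (S : C ⥤ C).map (T.η.app X.A ≫ p) ≫ (φ.app Y.A ≫ Y.a) = φ.app X.A ≫ p := by
    rw [Functor.map_comp, Category.assoc, ← Category.assoc ((S : C ⥤ C).map p), e3,
      Category.assoc, hg, ← Category.assoc, ← Category.assoc, e4, Category.assoc,
      Category.assoc]
    simp
  rw [rhs, lhs]

/-- The hom equivalence defining the adjunction. -/
noncomputable def homEquiv (X : S.Algebra) (Y : T.Algebra) :
    (Fobj φ X ⟶ Y) ≃ (X ⟶ (Monad.algebraFunctorOfMonadHom φ).obj Y) where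
  toFun g :=
    { f := T.η.app X.A ≫ (coequalizer.π _ _ ≫ g).f
      h := by
        refine toFun_h φ _ (coequalizer.π (T.free.map X.a) (restrictionPairSnd φ X) ≫ g).h ?_
        have hw := congrArg Monad.Algebra.Hom.f
          (coequalizer.condition (T.free.map X.a) (restrictionPairSnd φ X))
        dsimp [restrictionPairSnd] at hw ⊢
        have hw' := congrArg (· ≫ g.f) hw
        exact (Category.assoc _ _ _).symm.trans (hw'.trans (Category.assoc _ _ _)) }
  invFun k := coequalizer.desc (liftHom φ k) (liftHom_w φ k)
  left_inv g := by
    apply coequalizer.hom_ext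
    rw [coequalizer.π_desc]
    ext
    have hg := (coequalizer.π (T.free.map X.a) (restrictionPairSnd φ X) ≫ g).h
    change (T : C ⥤ C).map (coequalizer.π (T.free.map X.a) (restrictionPairSnd φ X) ≫ g).f ≫ Y.a =
      T.μ.app X.A ≫ (coequalizer.π (T.free.map X.a) (restrictionPairSnd φ X) ≫ g).f at hg
    dsimp [liftHom]
    erw [Functor.map_comp, Category.assoc, hg]
    erw [← Category.assoc, Monad.right_unit, Category.id_comp]
  right_inv k := by
    ext
    have h1 := congrArg Monad.Algebra.Hom.f
      (coequalizer.π_desc (liftHom φ k) (liftHom_w φ k))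
    dsimp [liftHom] at h1 ⊢
    have h2 : k.f ≫ T.η.app Y.A = T.η.app X.A ≫ (T : C ⥤ C).map k.f := by
      have := T.η.naturality k.f; dsimp at this; exact this
    erw [h1, ← Category.assoc, ← h2, Category.assoc, Y.unit]
    exact Category.comp_id _

theorem homEquiv_natural (X : S.Algebra) (Y Y' : T.Algebra) (g : Y ⟶ Y') (h : Fobj φ X ⟶ Y) :
    homEquiv φ X Y' (h ≫ g) = homEquiv φ X Y h ≫ (Monad.algebraFunctorOfMonadHom φ).map g := by
  ext
  dsimp [homEquiv]
  exact ((Category.assoc _ _ _).trans (congrArg (T.η.app X.A ≫ ·) (Category.assoc _ _ _))).symm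

end

/-- Let `φ : S ⟶ T` be a morphism of monads on `C` and suppose the
Eilenberg–Moore category of `T`-algebras has reflexive coequalizers.  Then the restriction
functor `G : Alg_T ⟶ Alg_S`, `(X, ξ) ↦ (X, ξ ∘ φ_X)`, has a left adjoint `F`; for an
`S`-algebra `(X, ξ_X)` the value `F(X)` is the reflexive coequalizer in `Alg_T` of the
pair `F_T(ξ_X)` and `μ_X ∘ T(φ_X) : F_T(S(X)) ⇉ F_T(X)`, with common section
`F_T(η^S_X)`. -/
theorem monadHom_restriction_hasLeftAdjoint
    (S T : Monad C) (φ : S ⟶ T) [HasReflexiveCoequalizers T.Algebra] :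
    ∃ (F : S.Algebra ⥤ T.Algebra) (_adj : F ⊣ Monad.algebraFunctorOfMonadHom φ),
      ∀ X : S.Algebra,
        -- the pair is reflexive, with common section `F_T(η^S_X)`
        (T.free.map (S.η.app X.A) ≫ T.free.map X.a = 𝟙 (T.free.obj X.A)) ∧
        (T.free.map (S.η.app X.A) ≫ restrictionPairSnd φ X = 𝟙 (T.free.obj X.A)) ∧
        -- and `F(X)` is its coequalizer
        ∃ (π : T.free.obj X.A ⟶ F.obj X)
          (w : T.free.map X.a ≫ π = restrictionPairSnd φ X ≫ π),
          Nonempty (IsColimit (Cofork.ofπ π w)) := by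
  refine ⟨Adjunction.leftAdjointOfEquiv (homEquiv φ) (homEquiv_natural φ),
    Adjunction.adjunctionOfEquivLeft _ _, fun X => ⟨sec_fst (T := T) X, sec_snd φ X, ?_⟩⟩
  haveI := hasCoeq φ X
  exact ⟨coequalizer.π _ _, coequalizer.condition _ _,
    ⟨coequalizerIsCoequalizer (T.free.map X.a) (restrictionPairSnd φ X)⟩⟩

end PaperMorita
end

section
/- Let M be a model category. Consider a commutative cube with top face consisting of maps X' ⟶ Y', X' ⟶ T', Y' ⟶ Z', T' ⟶ Z' and bottom face consisting of maps X ⟶ Y, X ⟶ T, Y ⟶ Z, T ⟶ Z, such that both the top and the bottom faces are homotopical cell attachments. If the three vertical maps X' ⟶ X, Y' ⟶ Y and T' ⟶ T are weak equivalences, then the fourth vertical map Z' ⟶ Z is also a weak equivalence between cofibrant objects. -/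
open CategoryTheory Limits

universe v u

namespace PaperMorita

variable {M : Type u} [Category.{v} M]

/-- `f` is a retract of `g` in the arrow category: there are morphisms `i, i'` and
`r, r'` with `r ∘ i = id`, `r' ∘ i' = id`, exhibiting the square of `f` as a retract of
the square of `g`. -/
def IsRetractOfArrow {X X' Y Y' : M} (f : X ⟶ X') (g : Y ⟶ Y') : Prop :=
  ∃ (i : X ⟶ Y) (r : Y ⟶ X) (i' : X' ⟶ Y') (r' : Y' ⟶ X'),
    i ≫ r = 𝟙 X ∧ i' ≫ r' = 𝟙 X' ∧ i ≫ g = f ≫ i' ∧ g ≫ r' = r ≫ f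

/-- A (Quillen) model structure on a category `M` with finite limits and colimits:
classes of cofibrations, weak equivalences and fibrations satisfying the two-out-of-three,
retract, lifting and factorization axioms. -/
structure ModelStructure (M : Type u) [Category.{v} M] where
  cof : MorphismProperty M
  we : MorphismProperty M
  fib : MorphismProperty M
  -- the three classes are subcategories (containing all objects, closed under composition)
  cof_id : ∀ X : M, cof (𝟙 X)
  we_id : ∀ X : M, we (𝟙 X)
  fib_id : ∀ X : M, fib (𝟙 X)
  cof_comp : ∀ {X Y Z : M} (f : X ⟶ Y) (g : Y ⟶ Z), cof f → cof g → cof (f ≫ g)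
  fib_comp : ∀ {X Y Z : M} (f : X ⟶ Y) (g : Y ⟶ Z), fib f → fib g → fib (f ≫ g)
  -- QM2: two out of three for weak equivalences
  we_comp : ∀ {X Y Z : M} (f : X ⟶ Y) (g : Y ⟶ Z), we f → we g → we (f ≫ g)
  we_of_comp_left : ∀ {X Y Z : M} (f : X ⟶ Y) (g : Y ⟶ Z), we f → we (f ≫ g) → we g
  we_of_comp_right : ∀ {X Y Z : M} (f : X ⟶ Y) (g : Y ⟶ Z), we g → we (f ≫ g) → we f
  -- QM3: stability under retracts
  cof_retract : ∀ {X X' Y Y' : M} (f : X ⟶ X') (g : Y ⟶ Y'),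
    IsRetractOfArrow f g → cof g → cof f
  we_retract : ∀ {X X' Y Y' : M} (f : X ⟶ X') (g : Y ⟶ Y'),
    IsRetractOfArrow f g → we g → we f
  fib_retract : ∀ {X X' Y Y' : M} (f : X ⟶ X') (g : Y ⟶ Y'),
    IsRetractOfArrow f g → fib g → fib f
  -- QM4: lifting
  lift_acyclic_cof : ∀ {A B X Y : M} (i : A ⟶ B) (p : X ⟶ Y),
    cof i → we i → fib p → HasLiftingProperty i p
  lift_acyclic_fib : ∀ {A B X Y : M} (i : A ⟶ B) (p : X ⟶ Y),
    cof i → fib p → we p → HasLiftingProperty i p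
  -- QM5: factorization
  factor_acyclicCof_fib : ∀ {X Y : M} (f : X ⟶ Y),
    ∃ (Z : M) (g : X ⟶ Z) (h : Z ⟶ Y), cof g ∧ we g ∧ fib h ∧ g ≫ h = f
  factor_cof_acyclicFib : ∀ {X Y : M} (f : X ⟶ Y),
    ∃ (Z : M) (g : X ⟶ Z) (h : Z ⟶ Y), cof g ∧ we h ∧ fib h ∧ g ≫ h = f

variable [HasFiniteLimits M] [HasFiniteColimits M]

/-- An object is cofibrant if the unique map from the initial object is a cofibration. -/
def Cofibrant (D : ModelStructure M) (X : M) : Prop :=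
  D.cof (initial.to X)

/-- A commutative square
```
X ⟶ T
↓     ↓
Y ⟶ Z
```
is a homotopical cell attachment if `X, Y, T, Z` are cofibrant, the vertical maps
`X ⟶ Y` and `T ⟶ Z` are cofibrations, and the comparison map `T ∪_X Y ⟶ Z` from the
pushout is a weak equivalence. -/
def IsHomotopicalCellAttachment (D : ModelStructure M) {X Y T Z : M}
    (f₁ : X ⟶ Y) (f₂ : X ⟶ T) (g₁ : Y ⟶ Z) (g₂ : T ⟶ Z)
    (w : f₁ ≫ g₁ = f₂ ≫ g₂) : Prop :=
  Cofibrant D X ∧ Cofibrant D Y ∧ Cofibrant D T ∧ Cofibrant D Z ∧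
  D.cof f₁ ∧ D.cof g₂ ∧ D.we (pushout.desc g₁ g₂ w)

-- ## Auxiliary lemmas

attribute [local simp] pushout.inl_desc pushout.inr_desc pushout.inl_desc_assoc pushout.inr_desc_assoc

lemma retract_of_factorization (D : ModelStructure M) {A B C : M} (i : A ⟶ B) (q : A ⟶ C)
    (p : C ⟶ B) (hqp : q ≫ p = i) (hl : HasLiftingProperty i p) : IsRetractOfArrow i q := by
  have sq : CommSq q i p (𝟙 B) := ⟨by simpa using hqp⟩
  obtain ⟨⟨l⟩⟩ := hl.sq_hasLift sq
  exact ⟨𝟙 A, 𝟙 A, l.l, p, by simp, l.fac_right, by simpa using l.fac_left.symm,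
    by simpa using hqp⟩

lemma tc_of_llp (D : ModelStructure M) {A B : M} (i : A ⟶ B)
    (h : ∀ {E F : M} (p : E ⟶ F), D.fib p → HasLiftingProperty i p) :
    D.cof i ∧ D.we i := by
  obtain ⟨C, q, p, hq, hq', hp, hqp⟩ := D.factor_acyclicCof_fib i
  have hr := retract_of_factorization D i q p hqp (h p hp)
  exact ⟨D.cof_retract i q hr hq, D.we_retract i q hr hq'⟩

lemma cof_of_llp (D : ModelStructure M) {A B : M} (i : A ⟶ B)
    (h : ∀ {E F : M} (p : E ⟶ F), D.fib p → D.we p → HasLiftingProperty i p) :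
    D.cof i := by
  obtain ⟨C, q, p, hq, hp', hp, hqp⟩ := D.factor_cof_acyclicFib i
  exact D.cof_retract i q (retract_of_factorization D i q p hqp (h p hp hp')) hq

lemma llp_of_isPushout {Z₀ X₀ Y₀ P₀ E F : M} {f : Z₀ ⟶ X₀} {g : Z₀ ⟶ Y₀}
    {h : X₀ ⟶ P₀} {i : Y₀ ⟶ P₀} (hpo : IsPushout f g h i) (p : E ⟶ F)
    (hg : HasLiftingProperty g p) : HasLiftingProperty h p := by
  constructor
  intro u v sq
  have sq2 : CommSq (f ≫ u) g p (i ≫ v) :=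
    ⟨by rw [Category.assoc, sq.w, ← Category.assoc, hpo.w, Category.assoc]⟩
  obtain ⟨⟨l⟩⟩ := hg.sq_hasLift sq2
  refine ⟨⟨⟨hpo.desc u l.l l.fac_left.symm, hpo.inl_desc _ _ _, ?_⟩⟩⟩
  apply hpo.hom_ext
  · rw [← Category.assoc, hpo.inl_desc, sq.w]
  · rw [← Category.assoc, hpo.inr_desc, l.fac_right]

lemma tc_of_isPushout (D : ModelStructure M) {Z₀ X₀ Y₀ P₀ : M} {f : Z₀ ⟶ X₀} {g : Z₀ ⟶ Y₀}
    {h : X₀ ⟶ P₀} {i : Y₀ ⟶ P₀} (hpo : IsPushout f g h i)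
    (hg : D.cof g ∧ D.we g) : D.cof h ∧ D.we h :=
  tc_of_llp D h fun p hp => llp_of_isPushout hpo p (D.lift_acyclic_cof g p hg.1 hg.2 hp)

lemma cof_of_isPushout (D : ModelStructure M) {Z₀ X₀ Y₀ P₀ : M} {f : Z₀ ⟶ X₀} {g : Z₀ ⟶ Y₀}
    {h : X₀ ⟶ P₀} {i : Y₀ ⟶ P₀} (hpo : IsPushout f g h i)
    (hg : D.cof g) : D.cof h :=
  cof_of_llp D h fun p hp hp' => llp_of_isPushout hpo p (D.lift_acyclic_fib g p hg hp hp')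

lemma isPushout_of_desc {Z₀ X₀ Y₀ P₀ : M} (f : Z₀ ⟶ X₀) (g : Z₀ ⟶ Y₀)
    (h : X₀ ⟶ P₀) (i : Y₀ ⟶ P₀) (comm : f ≫ h = g ≫ i)
    (ds : ∀ {W : M} (a : X₀ ⟶ W) (b : Y₀ ⟶ W), f ≫ a = g ≫ b → (P₀ ⟶ W))
    (fac₁ : ∀ {W : M} (a : X₀ ⟶ W) (b : Y₀ ⟶ W) (w : f ≫ a = g ≫ b), h ≫ ds a b w = a)
    (fac₂ : ∀ {W : M} (a : X₀ ⟶ W) (b : Y₀ ⟶ W) (w : f ≫ a = g ≫ b), i ≫ ds a b w = b)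
    (uniq : ∀ {W : M} (m m' : P₀ ⟶ W), h ≫ m = h ≫ m' → i ≫ m = i ≫ m' → m = m') :
    IsPushout f g h i := by
  apply IsPushout.of_isColimit' ⟨comm⟩
  apply PushoutCocone.isColimitAux'
  intro s
  refine ⟨ds s.inl s.inr s.condition, fac₁ _ _ _, fac₂ _ _ _, ?_⟩
  intro m hm1 hm2
  exact uniq _ _ (by rw [fac₁]; exact hm1) (by rw [fac₂]; exact hm2)


/-- Gluing lemma for a "Reedy trivial cofibration" of spans: if the vertical map on the
`T`-leg is a trivial cofibration and the relative latching map on the `Y`-leg is a trivial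
cofibration, then the induced map on pushouts is a weak equivalence. -/
lemma step1 (D : ModelStructure M) {X' Y' T' X Y T : M}
    (f₁' : X' ⟶ Y') (f₂' : X' ⟶ T') (f₁ : X ⟶ Y) (f₂ : X ⟶ T)
    (vX : X' ⟶ X) (vY : Y' ⟶ Y) (vT : T' ⟶ T)
    (sq₁ : f₁' ≫ vY = vX ≫ f₁) (sq₂ : f₂' ≫ vT = vX ≫ f₂)
    (hvT : D.cof vT ∧ D.we vT)
    (hjY : D.cof (pushout.desc vY f₁ sq₁ : pushout f₁' vX ⟶ Y) ∧
      D.we (pushout.desc vY f₁ sq₁ : pushout f₁' vX ⟶ Y)) :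
    D.we (pushout.map f₁' f₂' f₁ f₂ vY vT vX sq₁ sq₂) := by
  -- intermediate object  R = Y' ∪_{X'} T
  have sqR : f₂' ≫ vT = 𝟙 X' ≫ (vX ≫ f₂) := by rw [sq₂, Category.id_comp]
  set u : pushout f₁' f₂' ⟶ pushout f₁' (vX ≫ f₂) :=
    pushout.map f₁' f₂' f₁' (vX ≫ f₂) (𝟙 Y') vT (𝟙 X') (by simp) sqR with hu
  set v : pushout f₁' (vX ≫ f₂) ⟶ pushout f₁ f₂ :=
    pushout.map f₁' (vX ≫ f₂) f₁ f₂ vY (𝟙 T) vX sq₁ (by simp) with hv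
  -- `u` is the pushout of `vT`
  have hpo₁ : IsPushout (pushout.inr f₁' f₂') vT u (pushout.inr f₁' (vX ≫ f₂)) := by
    apply isPushout_of_desc _ _ _ _ (by rw [hu]; simp)
      (ds := fun {W} a b w => pushout.desc (pushout.inl f₁' f₂' ≫ a) b
        (by rw [← Category.assoc, pushout.condition, Category.assoc, w, ← Category.assoc,
            sq₂, Category.assoc]))
    · intro W a b w
      apply pushout.hom_ext
      · rw [hu]; simp
      · rw [hu]; simp [← w]
    · intro W a b w; simp
    · intro W m m' h1 h2
      apply pushout.hom_ext
      · have e : pushout.inl f₁' (vX ≫ f₂) = pushout.inl f₁' f₂' ≫ u := by rw [hu]; simp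
        rw [e, Category.assoc, Category.assoc, h1]
      · exact h2
  -- `v` is the pushout of `jY`
  set jY : pushout f₁' vX ⟶ Y := pushout.desc vY f₁ sq₁ with hjYdef
  set m : pushout f₁' vX ⟶ pushout f₁' (vX ≫ f₂) :=
    pushout.desc (pushout.inl f₁' (vX ≫ f₂)) (f₂ ≫ pushout.inr f₁' (vX ≫ f₂))
      (by rw [pushout.condition, Category.assoc]) with hm
  have hpo₂ : IsPushout m jY v (pushout.inl f₁ f₂) := by
    apply isPushout_of_desc _ _ _ _
      (by
        apply pushout.hom_ext
        · rw [hm, hv, hjYdef]; simp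
        · rw [hm, hv, hjYdef]; simp [pushout.condition])
      (ds := fun {W} a b w => pushout.desc b (pushout.inr f₁' (vX ≫ f₂) ≫ a)
        (by
          have h2 := pushout.inr f₁' vX ≫= w
          rw [hm, hjYdef] at h2
          simp only [← Category.assoc] at h2
          simp only [pushout.inr_desc] at h2
          rw [← h2, Category.assoc]))
    · intro W a b w
      apply pushout.hom_ext
      · have h1 := pushout.inl f₁' vX ≫= w
        rw [hm, hjYdef] at h1
        simp only [← Category.assoc] at h1
        simp only [pushout.inl_desc] at h1
        rw [hv]; simp [h1]
      · rw [hv]; simp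
    · intro W a b w; simp
    · intro W m₀ m₁ h1 h2
      apply pushout.hom_ext
      · exact h2
      · have e : pushout.inr f₁ f₂ = pushout.inr f₁' (vX ≫ f₂) ≫ v := by rw [hv]; simp
        rw [e, Category.assoc, Category.assoc, h1]
  have hwu : D.we u := (tc_of_isPushout D hpo₁ hvT).2
  have hwv : D.we v := (tc_of_isPushout D hpo₂ hjY).2
  have he : u ≫ v = pushout.map f₁' f₂' f₁ f₂ vY vT vX sq₁ sq₂ := by
    apply pushout.hom_ext
    · rw [hu, hv]; simp
    · rw [hu, hv]; simp
  rw [← he]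
  exact D.we_comp u v hwu hwv

/-- The relative latching square: `rA` is a pushout of `f₁`. -/
lemma latch_isPushout {X' X Y' Y X₀ Y₀ CX NY : M}
    (f₁' : X' ⟶ Y') (f₁ : X ⟶ Y)
    (iX' : X' ⟶ X₀) (iX : X ⟶ X₀) (hX₀ : IsPushout (initial.to X') (initial.to X) iX' iX)
    (iY' : Y' ⟶ Y₀) (iY : Y ⟶ Y₀) (hY₀ : IsPushout (initial.to Y') (initial.to Y) iY' iY)
    (qX : X₀ ⟶ CX) (F₁ : X₀ ⟶ Y₀)
    (hF₁l : iX' ≫ F₁ = f₁' ≫ iY') (hF₁r : iX ≫ F₁ = f₁ ≫ iY)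
    (nl : Y₀ ⟶ NY) (nr : CX ⟶ NY) (hNY : IsPushout F₁ qX nl nr)
    (rA : pushout f₁' (iX' ≫ qX) ⟶ NY)
    (hrAl : pushout.inl f₁' (iX' ≫ qX) ≫ rA = iY' ≫ nl)
    (hrAr : pushout.inr f₁' (iX' ≫ qX) ≫ rA = nr) :
    IsPushout ((iX ≫ qX) ≫ pushout.inr f₁' (iX' ≫ qX)) f₁ rA (iY ≫ nl) := by
  have hF₁l' := reassoc_of% hF₁l
  have hF₁r' := reassoc_of% hF₁r
  have hrAl' := reassoc_of% hrAl
  have hrAr' := reassoc_of% hrAr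
  have hcond' := reassoc_of% (pushout.condition (f := f₁') (g := iX' ≫ qX))
  apply isPushout_of_desc _ _ _ _
    (by
      simp only [Category.assoc, hrAr]
      rw [← hNY.w, ← Category.assoc, hF₁r, Category.assoc])
    (ds := fun {W} a b w =>
      hNY.desc (hY₀.desc (pushout.inl f₁' (iX' ≫ qX) ≫ a) b (initial.hom_ext _ _))
        (pushout.inr f₁' (iX' ≫ qX) ≫ a)
        (by
          apply hX₀.hom_ext
          · rw [hF₁l', hY₀.inl_desc, hcond']
          · rw [hF₁r', hY₀.inr_desc, ← w]
            simp only [Category.assoc]))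
  · intro W a b w
    apply pushout.hom_ext
    · rw [hrAl', hNY.inl_desc, hY₀.inl_desc]
    · rw [hrAr', hNY.inr_desc]
  · intro W a b w
    rw [Category.assoc, hNY.inl_desc, hY₀.inr_desc]
  · intro W m m' h1 h2
    apply hNY.hom_ext
    · apply hY₀.hom_ext
      · rw [← hrAl', ← hrAl', h1]
      · simp only [Category.assoc] at h2
        simpa only [Category.assoc] using h2
    · rw [← hrAr, Category.assoc, Category.assoc, h1]

/-- **Cube/gluing lemma for cofibrant spans.** -/
lemma cube (D : ModelStructure M) {X' Y' T' X Y T : M}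
    (f₁' : X' ⟶ Y') (f₂' : X' ⟶ T') (f₁ : X ⟶ Y) (f₂ : X ⟶ T)
    (vX : X' ⟶ X) (vY : Y' ⟶ Y) (vT : T' ⟶ T)
    (sq₁ : f₁' ≫ vY = vX ≫ f₁) (sq₂ : f₂' ≫ vT = vX ≫ f₂)
    (cX' : Cofibrant D X') (cT' : Cofibrant D T')
    (cX : Cofibrant D X) (cT : Cofibrant D T)
    (hf₁' : D.cof f₁') (hf₁ : D.cof f₁)
    (hvX : D.we vX) (hvY : D.we vY) (hvT : D.we vT) :
    D.we (pushout.map f₁' f₂' f₁ f₂ vY vT vX sq₁ sq₂) := by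
  -- the cylinder-type object on the `X`-side
  obtain ⟨CX, qX, pX, hqX, hpXw, hpXf, hfacX⟩ := D.factor_cof_acyclicFib (pushout.desc (f := initial.to X') (g := initial.to X) vX (𝟙 X) (initial.hom_ext _ _))
  have cofiXp : D.cof (pushout.inl (initial.to X') (initial.to X)) :=
    cof_of_isPushout D (IsPushout.of_hasPushout (initial.to X') (initial.to X)) cX
  have cofiX : D.cof (pushout.inr (initial.to X') (initial.to X)) :=
    cof_of_isPushout D (IsPushout.of_hasPushout (initial.to X') (initial.to X)).flip cX'
  have eXp : ((pushout.inl (initial.to X') (initial.to X)) ≫ qX) ≫ pX = vX := by simp [hfacX, reassoc_of% hfacX]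
  have eX : ((pushout.inr (initial.to X') (initial.to X)) ≫ qX) ≫ pX = 𝟙 X := by simp [hfacX, reassoc_of% hfacX]
  have tcκXp : D.cof ((pushout.inl (initial.to X') (initial.to X)) ≫ qX) ∧ D.we ((pushout.inl (initial.to X') (initial.to X)) ≫ qX) :=
    ⟨D.cof_comp _ _ cofiXp hqX, D.we_of_comp_right _ pX hpXw (eXp ▸ hvX)⟩
  have tcκX : D.cof ((pushout.inr (initial.to X') (initial.to X)) ≫ qX) ∧ D.we ((pushout.inr (initial.to X') (initial.to X)) ≫ qX) :=
    ⟨D.cof_comp _ _ cofiX hqX, D.we_of_comp_right _ pX hpXw (eX ▸ D.we_id X)⟩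
  -- `F₁`-compatibilities
  have hF₁l : (pushout.inl (initial.to X') (initial.to X)) ≫ (pushout.desc (f := initial.to X') (g := initial.to X) (f₁' ≫ (pushout.inl (initial.to Y') (initial.to Y))) (f₁ ≫ (pushout.inr (initial.to Y') (initial.to Y))) (initial.hom_ext _ _)) = f₁' ≫ (pushout.inl (initial.to Y') (initial.to Y)) := by simp
  have hF₁r : (pushout.inr (initial.to X') (initial.to X)) ≫ (pushout.desc (f := initial.to X') (g := initial.to X) (f₁' ≫ (pushout.inl (initial.to Y') (initial.to Y))) (f₁ ≫ (pushout.inr (initial.to Y') (initial.to Y))) (initial.hom_ext _ _)) = f₁ ≫ (pushout.inr (initial.to Y') (initial.to Y)) := by simp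
  have hF₂l : (pushout.inl (initial.to X') (initial.to X)) ≫ (pushout.desc (f := initial.to X') (g := initial.to X) (f₂' ≫ (pushout.inl (initial.to T') (initial.to T))) (f₂ ≫ (pushout.inr (initial.to T') (initial.to T))) (initial.hom_ext _ _)) = f₂' ≫ (pushout.inl (initial.to T') (initial.to T)) := by simp
  have hF₂r : (pushout.inr (initial.to X') (initial.to X)) ≫ (pushout.desc (f := initial.to X') (g := initial.to X) (f₂' ≫ (pushout.inl (initial.to T') (initial.to T))) (f₂ ≫ (pushout.inr (initial.to T') (initial.to T))) (initial.hom_ext _ _)) = f₂ ≫ (pushout.inr (initial.to T') (initial.to T)) := by simp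
  -- the Y-side
  have hcondY : (pushout.desc (f := initial.to X') (g := initial.to X) (f₁' ≫ (pushout.inl (initial.to Y') (initial.to Y))) (f₁ ≫ (pushout.inr (initial.to Y') (initial.to Y))) (initial.hom_ext _ _)) ≫ (pushout.desc (f := initial.to Y') (g := initial.to Y) vY (𝟙 Y) (initial.hom_ext _ _)) = qX ≫ (pX ≫ f₁) := by
    apply pushout.hom_ext <;> simp [hfacX, reassoc_of% hfacX, sq₁]
  obtain ⟨CY, qY, pY, hqY, hpYw, hpYf, hfacY⟩ := D.factor_cof_acyclicFib (pushout.desc (pushout.desc (f := initial.to Y') (g := initial.to Y) vY (𝟙 Y) (initial.hom_ext _ _)) (pX ≫ f₁) hcondY)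
  -- the T-side
  have hcondT : (pushout.desc (f := initial.to X') (g := initial.to X) (f₂' ≫ (pushout.inl (initial.to T') (initial.to T))) (f₂ ≫ (pushout.inr (initial.to T') (initial.to T))) (initial.hom_ext _ _)) ≫ (pushout.desc (f := initial.to T') (g := initial.to T) vT (𝟙 T) (initial.hom_ext _ _)) = qX ≫ (pX ≫ f₂) := by
    apply pushout.hom_ext <;> simp [hfacX, reassoc_of% hfacX, sq₂]
  obtain ⟨CT, qT, pT, hqT, hpTw, hpTf, hfacT⟩ := D.factor_cof_acyclicFib (pushout.desc (pushout.desc (f := initial.to T') (g := initial.to T) vT (𝟙 T) (initial.hom_ext _ _)) (pX ≫ f₂) hcondT)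
  -- trivial cofibrations into `CT`
  have cofnlT : D.cof (pushout.inl (pushout.desc (f := initial.to X') (g := initial.to X) (f₂' ≫ (pushout.inl (initial.to T') (initial.to T))) (f₂ ≫ (pushout.inr (initial.to T') (initial.to T))) (initial.hom_ext _ _)) qX) := cof_of_isPushout D (IsPushout.of_hasPushout (pushout.desc (f := initial.to X') (g := initial.to X) (f₂' ≫ (pushout.inl (initial.to T') (initial.to T))) (f₂ ≫ (pushout.inr (initial.to T') (initial.to T))) (initial.hom_ext _ _)) qX) hqX
  have eTp : ((pushout.inl (initial.to T') (initial.to T)) ≫ (pushout.inl (pushout.desc (f := initial.to X') (g := initial.to X) (f₂' ≫ (pushout.inl (initial.to T') (initial.to T))) (f₂ ≫ (pushout.inr (initial.to T') (initial.to T))) (initial.hom_ext _ _)) qX) ≫ qT) ≫ pT = vT := by simp [hfacT, reassoc_of% hfacT]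
  have eT' : ((pushout.inr (initial.to T') (initial.to T)) ≫ (pushout.inl (pushout.desc (f := initial.to X') (g := initial.to X) (f₂' ≫ (pushout.inl (initial.to T') (initial.to T))) (f₂ ≫ (pushout.inr (initial.to T') (initial.to T))) (initial.hom_ext _ _)) qX) ≫ qT) ≫ pT = 𝟙 T := by simp [hfacT, reassoc_of% hfacT]
  have tcκTp : D.cof ((pushout.inl (initial.to T') (initial.to T)) ≫ (pushout.inl (pushout.desc (f := initial.to X') (g := initial.to X) (f₂' ≫ (pushout.inl (initial.to T') (initial.to T))) (f₂ ≫ (pushout.inr (initial.to T') (initial.to T))) (initial.hom_ext _ _)) qX) ≫ qT) ∧ D.we ((pushout.inl (initial.to T') (initial.to T)) ≫ (pushout.inl (pushout.desc (f := initial.to X') (g := initial.to X) (f₂' ≫ (pushout.inl (initial.to T') (initial.to T))) (f₂ ≫ (pushout.inr (initial.to T') (initial.to T))) (initial.hom_ext _ _)) qX) ≫ qT) := by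
    constructor
    · exact D.cof_comp _ _
        (cof_of_isPushout D (IsPushout.of_hasPushout (initial.to T') (initial.to T)) cT)
        (D.cof_comp _ _ cofnlT hqT)
    · exact D.we_of_comp_right _ pT hpTw (eTp ▸ hvT)
  have tcκT : D.cof ((pushout.inr (initial.to T') (initial.to T)) ≫ (pushout.inl (pushout.desc (f := initial.to X') (g := initial.to X) (f₂' ≫ (pushout.inl (initial.to T') (initial.to T))) (f₂ ≫ (pushout.inr (initial.to T') (initial.to T))) (initial.hom_ext _ _)) qX) ≫ qT) ∧ D.we ((pushout.inr (initial.to T') (initial.to T)) ≫ (pushout.inl (pushout.desc (f := initial.to X') (g := initial.to X) (f₂' ≫ (pushout.inl (initial.to T') (initial.to T))) (f₂ ≫ (pushout.inr (initial.to T') (initial.to T))) (initial.hom_ext _ _)) qX) ≫ qT) := by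
    constructor
    · exact D.cof_comp _ _
        (cof_of_isPushout D (IsPushout.of_hasPushout (initial.to T') (initial.to T)).flip cT')
        (D.cof_comp _ _ cofnlT hqT)
    · exact D.we_of_comp_right _ pT hpTw (eT' ▸ D.we_id T)
  -- weak equivalences into `CY`
  have eYp : ((pushout.inl (initial.to Y') (initial.to Y)) ≫ (pushout.inl (pushout.desc (f := initial.to X') (g := initial.to X) (f₁' ≫ (pushout.inl (initial.to Y') (initial.to Y))) (f₁ ≫ (pushout.inr (initial.to Y') (initial.to Y))) (initial.hom_ext _ _)) qX) ≫ qY) ≫ pY = vY := by simp [hfacY, reassoc_of% hfacY]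
  have eY' : ((pushout.inr (initial.to Y') (initial.to Y)) ≫ (pushout.inl (pushout.desc (f := initial.to X') (g := initial.to X) (f₁' ≫ (pushout.inl (initial.to Y') (initial.to Y))) (f₁ ≫ (pushout.inr (initial.to Y') (initial.to Y))) (initial.hom_ext _ _)) qX) ≫ qY) ≫ pY = 𝟙 Y := by simp [hfacY, reassoc_of% hfacY]
  have weκYp : D.we ((pushout.inl (initial.to Y') (initial.to Y)) ≫ (pushout.inl (pushout.desc (f := initial.to X') (g := initial.to X) (f₁' ≫ (pushout.inl (initial.to Y') (initial.to Y))) (f₁ ≫ (pushout.inr (initial.to Y') (initial.to Y))) (initial.hom_ext _ _)) qX) ≫ qY) := D.we_of_comp_right _ pY hpYw (eYp ▸ hvY)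
  have weκY : D.we ((pushout.inr (initial.to Y') (initial.to Y)) ≫ (pushout.inl (pushout.desc (f := initial.to X') (g := initial.to X) (f₁' ≫ (pushout.inl (initial.to Y') (initial.to Y))) (f₁ ≫ (pushout.inr (initial.to Y') (initial.to Y))) (initial.hom_ext _ _)) qX) ≫ qY) := D.we_of_comp_right _ pY hpYw (eY' ▸ D.we_id Y)
  -- the span `C` commutes with the inclusions
  have sqY' : f₁' ≫ ((pushout.inl (initial.to Y') (initial.to Y)) ≫ (pushout.inl (pushout.desc (f := initial.to X') (g := initial.to X) (f₁' ≫ (pushout.inl (initial.to Y') (initial.to Y))) (f₁ ≫ (pushout.inr (initial.to Y') (initial.to Y))) (initial.hom_ext _ _)) qX) ≫ qY) = ((pushout.inl (initial.to X') (initial.to X)) ≫ qX) ≫ ((pushout.inr (pushout.desc (f := initial.to X') (g := initial.to X) (f₁' ≫ (pushout.inl (initial.to Y') (initial.to Y))) (f₁ ≫ (pushout.inr (initial.to Y') (initial.to Y))) (initial.hom_ext _ _)) qX) ≫ qY) := by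
    have hA0 : f₁' ≫ (pushout.inl (initial.to Y') (initial.to Y)) ≫ (pushout.inl (pushout.desc (f := initial.to X') (g := initial.to X) (f₁' ≫ (pushout.inl (initial.to Y') (initial.to Y))) (f₁ ≫ (pushout.inr (initial.to Y') (initial.to Y))) (initial.hom_ext _ _)) qX) = ((pushout.inl (initial.to X') (initial.to X)) ≫ qX) ≫ (pushout.inr (pushout.desc (f := initial.to X') (g := initial.to X) (f₁' ≫ (pushout.inl (initial.to Y') (initial.to Y))) (f₁ ≫ (pushout.inr (initial.to Y') (initial.to Y))) (initial.hom_ext _ _)) qX) := by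
      rw [← reassoc_of% hF₁l, pushout.condition]; simp only [Category.assoc]
    have := hA0 =≫ qY
    simpa only [Category.assoc] using this
  have sqY : f₁ ≫ ((pushout.inr (initial.to Y') (initial.to Y)) ≫ (pushout.inl (pushout.desc (f := initial.to X') (g := initial.to X) (f₁' ≫ (pushout.inl (initial.to Y') (initial.to Y))) (f₁ ≫ (pushout.inr (initial.to Y') (initial.to Y))) (initial.hom_ext _ _)) qX) ≫ qY) = ((pushout.inr (initial.to X') (initial.to X)) ≫ qX) ≫ ((pushout.inr (pushout.desc (f := initial.to X') (g := initial.to X) (f₁' ≫ (pushout.inl (initial.to Y') (initial.to Y))) (f₁ ≫ (pushout.inr (initial.to Y') (initial.to Y))) (initial.hom_ext _ _)) qX) ≫ qY) := by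
    have hB0 : f₁ ≫ (pushout.inr (initial.to Y') (initial.to Y)) ≫ (pushout.inl (pushout.desc (f := initial.to X') (g := initial.to X) (f₁' ≫ (pushout.inl (initial.to Y') (initial.to Y))) (f₁ ≫ (pushout.inr (initial.to Y') (initial.to Y))) (initial.hom_ext _ _)) qX) = ((pushout.inr (initial.to X') (initial.to X)) ≫ qX) ≫ (pushout.inr (pushout.desc (f := initial.to X') (g := initial.to X) (f₁' ≫ (pushout.inl (initial.to Y') (initial.to Y))) (f₁ ≫ (pushout.inr (initial.to Y') (initial.to Y))) (initial.hom_ext _ _)) qX) := by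
      rw [← reassoc_of% hF₁r, pushout.condition]; simp only [Category.assoc]
    have := hB0 =≫ qY
    simpa only [Category.assoc] using this
  have sqT' : f₂' ≫ ((pushout.inl (initial.to T') (initial.to T)) ≫ (pushout.inl (pushout.desc (f := initial.to X') (g := initial.to X) (f₂' ≫ (pushout.inl (initial.to T') (initial.to T))) (f₂ ≫ (pushout.inr (initial.to T') (initial.to T))) (initial.hom_ext _ _)) qX) ≫ qT) = ((pushout.inl (initial.to X') (initial.to X)) ≫ qX) ≫ ((pushout.inr (pushout.desc (f := initial.to X') (g := initial.to X) (f₂' ≫ (pushout.inl (initial.to T') (initial.to T))) (f₂ ≫ (pushout.inr (initial.to T') (initial.to T))) (initial.hom_ext _ _)) qX) ≫ qT) := by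
    have hA0 : f₂' ≫ (pushout.inl (initial.to T') (initial.to T)) ≫ (pushout.inl (pushout.desc (f := initial.to X') (g := initial.to X) (f₂' ≫ (pushout.inl (initial.to T') (initial.to T))) (f₂ ≫ (pushout.inr (initial.to T') (initial.to T))) (initial.hom_ext _ _)) qX) = ((pushout.inl (initial.to X') (initial.to X)) ≫ qX) ≫ (pushout.inr (pushout.desc (f := initial.to X') (g := initial.to X) (f₂' ≫ (pushout.inl (initial.to T') (initial.to T))) (f₂ ≫ (pushout.inr (initial.to T') (initial.to T))) (initial.hom_ext _ _)) qX) := by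
      rw [← reassoc_of% hF₂l, pushout.condition]; simp only [Category.assoc]
    have := hA0 =≫ qT
    simpa only [Category.assoc] using this
  have sqT : f₂ ≫ ((pushout.inr (initial.to T') (initial.to T)) ≫ (pushout.inl (pushout.desc (f := initial.to X') (g := initial.to X) (f₂' ≫ (pushout.inl (initial.to T') (initial.to T))) (f₂ ≫ (pushout.inr (initial.to T') (initial.to T))) (initial.hom_ext _ _)) qX) ≫ qT) = ((pushout.inr (initial.to X') (initial.to X)) ≫ qX) ≫ ((pushout.inr (pushout.desc (f := initial.to X') (g := initial.to X) (f₂' ≫ (pushout.inl (initial.to T') (initial.to T))) (f₂ ≫ (pushout.inr (initial.to T') (initial.to T))) (initial.hom_ext _ _)) qX) ≫ qT) := by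
    have hB0 : f₂ ≫ (pushout.inr (initial.to T') (initial.to T)) ≫ (pushout.inl (pushout.desc (f := initial.to X') (g := initial.to X) (f₂' ≫ (pushout.inl (initial.to T') (initial.to T))) (f₂ ≫ (pushout.inr (initial.to T') (initial.to T))) (initial.hom_ext _ _)) qX) = ((pushout.inr (initial.to X') (initial.to X)) ≫ qX) ≫ (pushout.inr (pushout.desc (f := initial.to X') (g := initial.to X) (f₂' ≫ (pushout.inl (initial.to T') (initial.to T))) (f₂ ≫ (pushout.inr (initial.to T') (initial.to T))) (initial.hom_ext _ _)) qX) := by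
      rw [← reassoc_of% hF₂r, pushout.condition]; simp only [Category.assoc]
    have := hB0 =≫ qT
    simpa only [Category.assoc] using this
  -- relative latching maps on the Y-side
  have hA : f₁' ≫ (pushout.inl (initial.to Y') (initial.to Y)) ≫ (pushout.inl (pushout.desc (f := initial.to X') (g := initial.to X) (f₁' ≫ (pushout.inl (initial.to Y') (initial.to Y))) (f₁ ≫ (pushout.inr (initial.to Y') (initial.to Y))) (initial.hom_ext _ _)) qX) = ((pushout.inl (initial.to X') (initial.to X)) ≫ qX) ≫ (pushout.inr (pushout.desc (f := initial.to X') (g := initial.to X) (f₁' ≫ (pushout.inl (initial.to Y') (initial.to Y))) (f₁ ≫ (pushout.inr (initial.to Y') (initial.to Y))) (initial.hom_ext _ _)) qX) := by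
    rw [← reassoc_of% hF₁l, pushout.condition]; simp only [Category.assoc]
  have hB : f₁ ≫ (pushout.inr (initial.to Y') (initial.to Y)) ≫ (pushout.inl (pushout.desc (f := initial.to X') (g := initial.to X) (f₁' ≫ (pushout.inl (initial.to Y') (initial.to Y))) (f₁ ≫ (pushout.inr (initial.to Y') (initial.to Y))) (initial.hom_ext _ _)) qX) = ((pushout.inr (initial.to X') (initial.to X)) ≫ qX) ≫ (pushout.inr (pushout.desc (f := initial.to X') (g := initial.to X) (f₁' ≫ (pushout.inl (initial.to Y') (initial.to Y))) (f₁ ≫ (pushout.inr (initial.to Y') (initial.to Y))) (initial.hom_ext _ _)) qX) := by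
    rw [← reassoc_of% hF₁r, pushout.condition]; simp only [Category.assoc]
  have hrApo := latch_isPushout f₁' f₁ (pushout.inl (initial.to X') (initial.to X)) (pushout.inr (initial.to X') (initial.to X))
    (IsPushout.of_hasPushout (initial.to X') (initial.to X)) (pushout.inl (initial.to Y') (initial.to Y)) (pushout.inr (initial.to Y') (initial.to Y))
    (IsPushout.of_hasPushout (initial.to Y') (initial.to Y)) qX (pushout.desc (f := initial.to X') (g := initial.to X) (f₁' ≫ (pushout.inl (initial.to Y') (initial.to Y))) (f₁ ≫ (pushout.inr (initial.to Y') (initial.to Y))) (initial.hom_ext _ _)) hF₁l hF₁r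
    (pushout.inl (pushout.desc (f := initial.to X') (g := initial.to X) (f₁' ≫ (pushout.inl (initial.to Y') (initial.to Y))) (f₁ ≫ (pushout.inr (initial.to Y') (initial.to Y))) (initial.hom_ext _ _)) qX) (pushout.inr (pushout.desc (f := initial.to X') (g := initial.to X) (f₁' ≫ (pushout.inl (initial.to Y') (initial.to Y))) (f₁ ≫ (pushout.inr (initial.to Y') (initial.to Y))) (initial.hom_ext _ _)) qX) (IsPushout.of_hasPushout (pushout.desc (f := initial.to X') (g := initial.to X) (f₁' ≫ (pushout.inl (initial.to Y') (initial.to Y))) (f₁ ≫ (pushout.inr (initial.to Y') (initial.to Y))) (initial.hom_ext _ _)) qX) (pushout.desc ((pushout.inl (initial.to Y') (initial.to Y)) ≫ (pushout.inl (pushout.desc (f := initial.to X') (g := initial.to X) (f₁' ≫ (pushout.inl (initial.to Y') (initial.to Y))) (f₁ ≫ (pushout.inr (initial.to Y') (initial.to Y))) (initial.hom_ext _ _)) qX)) (pushout.inr (pushout.desc (f := initial.to X') (g := initial.to X) (f₁' ≫ (pushout.inl (initial.to Y') (initial.to Y))) (f₁ ≫ (pushout.inr (initial.to Y') (initial.to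 Y))) (initial.hom_ext _ _)) qX) hA) (by simp) (by simp)
  have hrBpo := latch_isPushout f₁ f₁' (pushout.inr (initial.to X') (initial.to X)) (pushout.inl (initial.to X') (initial.to X))
    (IsPushout.of_hasPushout (initial.to X') (initial.to X)).flip (pushout.inr (initial.to Y') (initial.to Y)) (pushout.inl (initial.to Y') (initial.to Y))
    (IsPushout.of_hasPushout (initial.to Y') (initial.to Y)).flip qX (pushout.desc (f := initial.to X') (g := initial.to X) (f₁' ≫ (pushout.inl (initial.to Y') (initial.to Y))) (f₁ ≫ (pushout.inr (initial.to Y') (initial.to Y))) (initial.hom_ext _ _)) hF₁r hF₁l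
    (pushout.inl (pushout.desc (f := initial.to X') (g := initial.to X) (f₁' ≫ (pushout.inl (initial.to Y') (initial.to Y))) (f₁ ≫ (pushout.inr (initial.to Y') (initial.to Y))) (initial.hom_ext _ _)) qX) (pushout.inr (pushout.desc (f := initial.to X') (g := initial.to X) (f₁' ≫ (pushout.inl (initial.to Y') (initial.to Y))) (f₁ ≫ (pushout.inr (initial.to Y') (initial.to Y))) (initial.hom_ext _ _)) qX) (IsPushout.of_hasPushout (pushout.desc (f := initial.to X') (g := initial.to X) (f₁' ≫ (pushout.inl (initial.to Y') (initial.to Y))) (f₁ ≫ (pushout.inr (initial.to Y') (initial.to Y))) (initial.hom_ext _ _)) qX) (pushout.desc ((pushout.inr (initial.to Y') (initial.to Y)) ≫ (pushout.inl (pushout.desc (f := initial.to X') (g := initial.to X) (f₁' ≫ (pushout.inl (initial.to Y') (initial.to Y))) (f₁ ≫ (pushout.inr (initial.to Y') (initial.to Y))) (initial.hom_ext _ _)) qX)) (pushout.inr (pushout.desc (f := initial.to X') (g := initial.to X) (f₁' ≫ (pushout.inl (initial.to Y') (initial.to Y))) (f₁ ≫ (pushout.inr (initial.to Y') (initial.to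 Y))) (initial.hom_ext _ _)) qX) hB) (by simp) (by simp)
  have cofrA : D.cof (pushout.desc ((pushout.inl (initial.to Y') (initial.to Y)) ≫ (pushout.inl (pushout.desc (f := initial.to X') (g := initial.to X) (f₁' ≫ (pushout.inl (initial.to Y') (initial.to Y))) (f₁ ≫ (pushout.inr (initial.to Y') (initial.to Y))) (initial.hom_ext _ _)) qX)) (pushout.inr (pushout.desc (f := initial.to X') (g := initial.to X) (f₁' ≫ (pushout.inl (initial.to Y') (initial.to Y))) (f₁ ≫ (pushout.inr (initial.to Y') (initial.to Y))) (initial.hom_ext _ _)) qX) hA) := cof_of_isPushout D hrApo hf₁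
  have cofrB : D.cof (pushout.desc ((pushout.inr (initial.to Y') (initial.to Y)) ≫ (pushout.inl (pushout.desc (f := initial.to X') (g := initial.to X) (f₁' ≫ (pushout.inl (initial.to Y') (initial.to Y))) (f₁ ≫ (pushout.inr (initial.to Y') (initial.to Y))) (initial.hom_ext _ _)) qX)) (pushout.inr (pushout.desc (f := initial.to X') (g := initial.to X) (f₁' ≫ (pushout.inl (initial.to Y') (initial.to Y))) (f₁ ≫ (pushout.inr (initial.to Y') (initial.to Y))) (initial.hom_ext _ _)) qX) hB) := cof_of_isPushout D hrBpo hf₁'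
  -- the latching maps, as trivial cofibrations
  have hjYpeq : (pushout.desc ((pushout.inl (initial.to Y') (initial.to Y)) ≫ (pushout.inl (pushout.desc (f := initial.to X') (g := initial.to X) (f₁' ≫ (pushout.inl (initial.to Y') (initial.to Y))) (f₁ ≫ (pushout.inr (initial.to Y') (initial.to Y))) (initial.hom_ext _ _)) qX) ≫ qY) ((pushout.inr (pushout.desc (f := initial.to X') (g := initial.to X) (f₁' ≫ (pushout.inl (initial.to Y') (initial.to Y))) (f₁ ≫ (pushout.inr (initial.to Y') (initial.to Y))) (initial.hom_ext _ _)) qX) ≫ qY) sqY' : pushout f₁' ((pushout.inl (initial.to X') (initial.to X)) ≫ qX) ⟶ CY) = (pushout.desc ((pushout.inl (initial.to Y') (initial.to Y)) ≫ (pushout.inl (pushout.desc (f := initial.to X') (g := initial.to X) (f₁' ≫ (pushout.inl (initial.to Y') (initial.to Y))) (f₁ ≫ (pushout.inr (initial.to Y') (initial.to Y))) (initial.hom_ext _ _)) qX)) (pushout.inr (pushout.desc (f := initial.to X') (g := initial.to X) (f₁' ≫ (pushout.inl (initial.to Y') (initial.to Y))) (f₁ ≫ (pushout.inr (initial.to Y')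 (initial.to Y))) (initial.hom_ext _ _)) qX) hA) ≫ qY := by
    apply pushout.hom_ext <;> simp
  have hjYeq : (pushout.desc ((pushout.inr (initial.to Y') (initial.to Y)) ≫ (pushout.inl (pushout.desc (f := initial.to X') (g := initial.to X) (f₁' ≫ (pushout.inl (initial.to Y') (initial.to Y))) (f₁ ≫ (pushout.inr (initial.to Y') (initial.to Y))) (initial.hom_ext _ _)) qX) ≫ qY) ((pushout.inr (pushout.desc (f := initial.to X') (g := initial.to X) (f₁' ≫ (pushout.inl (initial.to Y') (initial.to Y))) (f₁ ≫ (pushout.inr (initial.to Y') (initial.to Y))) (initial.hom_ext _ _)) qX) ≫ qY) sqY : pushout f₁ ((pushout.inr (initial.to X') (initial.to X)) ≫ qX) ⟶ CY) = (pushout.desc ((pushout.inr (initial.to Y') (initial.to Y)) ≫ (pushout.inl (pushout.desc (f := initial.to X') (g := initial.to X) (f₁' ≫ (pushout.inl (initial.to Y') (initial.to Y))) (f₁ ≫ (pushout.inr (initial.to Y') (initial.to Y))) (initial.hom_ext _ _)) qX)) (pushout.inr (pushout.desc (f := initial.to X') (g := initial.to X) (f₁' ≫ (pushout.inl (initial.to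 Y') (initial.to Y))) (f₁ ≫ (pushout.inr (initial.to Y') (initial.to Y))) (initial.hom_ext _ _)) qX) hB) ≫ qY := by
    apply pushout.hom_ext <;> simp
  have tcInlA := tc_of_isPushout D (IsPushout.of_hasPushout f₁' ((pushout.inl (initial.to X') (initial.to X)) ≫ qX)) tcκXp
  have tcInlB := tc_of_isPushout D (IsPushout.of_hasPushout f₁ ((pushout.inr (initial.to X') (initial.to X)) ≫ qX)) tcκX
  have tcjYp : D.cof (pushout.desc ((pushout.inl (initial.to Y') (initial.to Y)) ≫ (pushout.inl (pushout.desc (f := initial.to X') (g := initial.to X) (f₁' ≫ (pushout.inl (initial.to Y') (initial.to Y))) (f₁ ≫ (pushout.inr (initial.to Y') (initial.to Y))) (initial.hom_ext _ _)) qX) ≫ qY) ((pushout.inr (pushout.desc (f := initial.to X') (g := initial.to X) (f₁' ≫ (pushout.inl (initial.to Y') (initial.to Y))) (f₁ ≫ (pushout.inr (initial.to Y') (initial.to Y))) (initial.hom_ext _ _)) qX) ≫ qY) sqY' : pushout f₁' ((pushout.inl (initial.to X') (initial.to X)) ≫ qX) ⟶ CY) ∧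
      D.we (pushout.desc ((pushout.inl (initial.to Y') (initial.to Y)) ≫ (pushout.inl (pushout.desc (f := initial.to X') (g := initial.to X) (f₁' ≫ (pushout.inl (initial.to Y') (initial.to Y))) (f₁ ≫ (pushout.inr (initial.to Y') (initial.to Y))) (initial.hom_ext _ _)) qX) ≫ qY) ((pushout.inr (pushout.desc (f := initial.to X') (g := initial.to X) (f₁' ≫ (pushout.inl (initial.to Y') (initial.to Y))) (f₁ ≫ (pushout.inr (initial.to Y') (initial.to Y))) (initial.hom_ext _ _)) qX) ≫ qY) sqY') := by
    constructor
    · rw [hjYpeq]; exact D.cof_comp _ _ cofrA hqY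
    · exact D.we_of_comp_left _ _ tcInlA.2 (by rw [pushout.inl_desc]; exact weκYp)
  have tcjY : D.cof (pushout.desc ((pushout.inr (initial.to Y') (initial.to Y)) ≫ (pushout.inl (pushout.desc (f := initial.to X') (g := initial.to X) (f₁' ≫ (pushout.inl (initial.to Y') (initial.to Y))) (f₁ ≫ (pushout.inr (initial.to Y') (initial.to Y))) (initial.hom_ext _ _)) qX) ≫ qY) ((pushout.inr (pushout.desc (f := initial.to X') (g := initial.to X) (f₁' ≫ (pushout.inl (initial.to Y') (initial.to Y))) (f₁ ≫ (pushout.inr (initial.to Y') (initial.to Y))) (initial.hom_ext _ _)) qX) ≫ qY) sqY : pushout f₁ ((pushout.inr (initial.to X') (initial.to X)) ≫ qX) ⟶ CY) ∧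
      D.we (pushout.desc ((pushout.inr (initial.to Y') (initial.to Y)) ≫ (pushout.inl (pushout.desc (f := initial.to X') (g := initial.to X) (f₁' ≫ (pushout.inl (initial.to Y') (initial.to Y))) (f₁ ≫ (pushout.inr (initial.to Y') (initial.to Y))) (initial.hom_ext _ _)) qX) ≫ qY) ((pushout.inr (pushout.desc (f := initial.to X') (g := initial.to X) (f₁' ≫ (pushout.inl (initial.to Y') (initial.to Y))) (f₁ ≫ (pushout.inr (initial.to Y') (initial.to Y))) (initial.hom_ext _ _)) qX) ≫ qY) sqY) := by
    constructor
    · rw [hjYeq]; exact D.cof_comp _ _ cofrB hqY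
    · exact D.we_of_comp_left _ _ tcInlB.2 (by rw [pushout.inl_desc]; exact weκY)
  -- apply the Reedy gluing step twice
  have w1 := step1 D f₁' f₂' ((pushout.inr (pushout.desc (f := initial.to X') (g := initial.to X) (f₁' ≫ (pushout.inl (initial.to Y') (initial.to Y))) (f₁ ≫ (pushout.inr (initial.to Y') (initial.to Y))) (initial.hom_ext _ _)) qX) ≫ qY) ((pushout.inr (pushout.desc (f := initial.to X') (g := initial.to X) (f₂' ≫ (pushout.inl (initial.to T') (initial.to T))) (f₂ ≫ (pushout.inr (initial.to T') (initial.to T))) (initial.hom_ext _ _)) qX) ≫ qT) ((pushout.inl (initial.to X') (initial.to X)) ≫ qX) ((pushout.inl (initial.to Y') (initial.to Y)) ≫ (pushout.inl (pushout.desc (f := initial.to X') (g := initial.to X) (f₁' ≫ (pushout.inl (initial.to Y') (initial.to Y))) (f₁ ≫ (pushout.inr (initial.to Y') (initial.to Y))) (initial.hom_ext _ _)) qX) ≫ qY) ((pushout.inl (initial.to T') (initial.to T)) ≫ (pushout.inl (pushout.desc (f := initial.to X') (g := initial.to X) (f₂' ≫ (pushout.inl (initial.to T') (initial.to T))) (f₂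 ≫ (pushout.inr (initial.to T') (initial.to T))) (initial.hom_ext _ _)) qX) ≫ qT) sqY' sqT' tcκTp tcjYp
  have w2 := step1 D f₁ f₂ ((pushout.inr (pushout.desc (f := initial.to X') (g := initial.to X) (f₁' ≫ (pushout.inl (initial.to Y') (initial.to Y))) (f₁ ≫ (pushout.inr (initial.to Y') (initial.to Y))) (initial.hom_ext _ _)) qX) ≫ qY) ((pushout.inr (pushout.desc (f := initial.to X') (g := initial.to X) (f₂' ≫ (pushout.inl (initial.to T') (initial.to T))) (f₂ ≫ (pushout.inr (initial.to T') (initial.to T))) (initial.hom_ext _ _)) qX) ≫ qT) ((pushout.inr (initial.to X') (initial.to X)) ≫ qX) ((pushout.inr (initial.to Y') (initial.to Y)) ≫ (pushout.inl (pushout.desc (f := initial.to X') (g := initial.to X) (f₁' ≫ (pushout.inl (initial.to Y') (initial.to Y))) (f₁ ≫ (pushout.inr (initial.to Y') (initial.to Y))) (initial.hom_ext _ _)) qX) ≫ qY) ((pushout.inr (initial.to T') (initial.to T)) ≫ (pushout.inl (pushout.desc (f := initial.to X') (g := initial.to X) (f₂' ≫ (pushout.inl (initial.to T') (initial.to T)))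 (f₂ ≫ (pushout.inr (initial.to T') (initial.to T))) (initial.hom_ext _ _)) qX) ≫ qT) sqY sqT tcκT tcjY
  -- the projection of spans
  have eY2 : ((pushout.inr (pushout.desc (f := initial.to X') (g := initial.to X) (f₁' ≫ (pushout.inl (initial.to Y') (initial.to Y))) (f₁ ≫ (pushout.inr (initial.to Y') (initial.to Y))) (initial.hom_ext _ _)) qX) ≫ qY) ≫ pY = pX ≫ f₁ := by simp [hfacY, reassoc_of% hfacY]
  have eT2 : ((pushout.inr (pushout.desc (f := initial.to X') (g := initial.to X) (f₂' ≫ (pushout.inl (initial.to T') (initial.to T))) (f₂ ≫ (pushout.inr (initial.to T') (initial.to T))) (initial.hom_ext _ _)) qX) ≫ qT) ≫ pT = pX ≫ f₂ := by simp [hfacT, reassoc_of% hfacT]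
  have c2 : pushout.map f₁ f₂ ((pushout.inr (pushout.desc (f := initial.to X') (g := initial.to X) (f₁' ≫ (pushout.inl (initial.to Y') (initial.to Y))) (f₁ ≫ (pushout.inr (initial.to Y') (initial.to Y))) (initial.hom_ext _ _)) qX) ≫ qY) ((pushout.inr (pushout.desc (f := initial.to X') (g := initial.to X) (f₂' ≫ (pushout.inl (initial.to T') (initial.to T))) (f₂ ≫ (pushout.inr (initial.to T') (initial.to T))) (initial.hom_ext _ _)) qX) ≫ qT) ((pushout.inr (initial.to Y') (initial.to Y)) ≫ (pushout.inl (pushout.desc (f := initial.to X') (g := initial.to X) (f₁' ≫ (pushout.inl (initial.to Y') (initial.to Y))) (f₁ ≫ (pushout.inr (initial.to Y') (initial.to Y))) (initial.hom_ext _ _)) qX) ≫ qY) ((pushout.inr (initial.to T') (initial.to T)) ≫ (pushout.inl (pushout.desc (f := initial.to X') (g := initial.to X) (f₂' ≫ (pushout.inl (initial.to T') (initial.to T))) (f₂ ≫ (pushout.inr (initial.to T') (initial.to T))) (initial.hom_ext _ _)) qX) ≫ qT) ((pushout.inr (initial.to X') (initial.to X)) ≫ qX) sqY sqT ≫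
      pushout.map ((pushout.inr (pushout.desc (f := initial.to X') (g := initial.to X) (f₁' ≫ (pushout.inl (initial.to Y') (initial.to Y))) (f₁ ≫ (pushout.inr (initial.to Y') (initial.to Y))) (initial.hom_ext _ _)) qX) ≫ qY) ((pushout.inr (pushout.desc (f := initial.to X') (g := initial.to X) (f₂' ≫ (pushout.inl (initial.to T') (initial.to T))) (f₂ ≫ (pushout.inr (initial.to T') (initial.to T))) (initial.hom_ext _ _)) qX) ≫ qT) f₁ f₂ pY pT pX eY2 eT2 = 𝟙 (pushout f₁ f₂) := by
    apply pushout.hom_ext <;> simp [hfacY, hfacT, reassoc_of% hfacY, reassoc_of% hfacT]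
  have c1 : pushout.map f₁' f₂' ((pushout.inr (pushout.desc (f := initial.to X') (g := initial.to X) (f₁' ≫ (pushout.inl (initial.to Y') (initial.to Y))) (f₁ ≫ (pushout.inr (initial.to Y') (initial.to Y))) (initial.hom_ext _ _)) qX) ≫ qY) ((pushout.inr (pushout.desc (f := initial.to X') (g := initial.to X) (f₂' ≫ (pushout.inl (initial.to T') (initial.to T))) (f₂ ≫ (pushout.inr (initial.to T') (initial.to T))) (initial.hom_ext _ _)) qX) ≫ qT) ((pushout.inl (initial.to Y') (initial.to Y)) ≫ (pushout.inl (pushout.desc (f := initial.to X') (g := initial.to X) (f₁' ≫ (pushout.inl (initial.to Y') (initial.to Y))) (f₁ ≫ (pushout.inr (initial.to Y') (initial.to Y))) (initial.hom_ext _ _)) qX) ≫ qY) ((pushout.inl (initial.to T') (initial.to T)) ≫ (pushout.inl (pushout.desc (f := initial.to X') (g := initial.to X) (f₂' ≫ (pushout.inl (initial.to T') (initial.to T))) (f₂ ≫ (pushout.inr (initial.to T') (initial.to T))) (initial.hom_ext _ _)) qX) ≫ qT) ((pushout.inl (initial.to X') (initial.to X)) ≫ qX) sqY' sqT' ≫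
      pushout.map ((pushout.inr (pushout.desc (f := initial.to X') (g := initial.to X) (f₁' ≫ (pushout.inl (initial.to Y') (initial.to Y))) (f₁ ≫ (pushout.inr (initial.to Y') (initial.to Y))) (initial.hom_ext _ _)) qX) ≫ qY) ((pushout.inr (pushout.desc (f := initial.to X') (g := initial.to X) (f₂' ≫ (pushout.inl (initial.to T') (initial.to T))) (f₂ ≫ (pushout.inr (initial.to T') (initial.to T))) (initial.hom_ext _ _)) qX) ≫ qT) f₁ f₂ pY pT pX eY2 eT2 =
      pushout.map f₁' f₂' f₁ f₂ vY vT vX sq₁ sq₂ := by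
    apply pushout.hom_ext <;> simp [hfacY, hfacT, reassoc_of% hfacY, reassoc_of% hfacT]
  have wpmp : D.we (pushout.map ((pushout.inr (pushout.desc (f := initial.to X') (g := initial.to X) (f₁' ≫ (pushout.inl (initial.to Y') (initial.to Y))) (f₁ ≫ (pushout.inr (initial.to Y') (initial.to Y))) (initial.hom_ext _ _)) qX) ≫ qY) ((pushout.inr (pushout.desc (f := initial.to X') (g := initial.to X) (f₂' ≫ (pushout.inl (initial.to T') (initial.to T))) (f₂ ≫ (pushout.inr (initial.to T') (initial.to T))) (initial.hom_ext _ _)) qX) ≫ qT) f₁ f₂ pY pT pX eY2 eT2) :=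
    D.we_of_comp_left _ _ w2 (by rw [c2]; exact D.we_id _)
  have wfinal := D.we_comp _ _ w1 wpmp
  rw [c1] at wfinal
  exact wfinal

/-- **generalized patching lemma of Reedy.** Let `M` be a model category.
Consider a commutative cube whose top face (with vertices `X', Y', T', Z'`) and bottom
face (with vertices `X, Y, T, Z`) are homotopical cell attachments.  If the three
vertical maps `X' ⟶ X`, `Y' ⟶ Y` and `T' ⟶ T` are weak equivalences, then so is the
fourth vertical map `Z' ⟶ Z`, and it is a weak equivalence between cofibrant objects. -/
theorem generalized_reedy_patching (D : ModelStructure M)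
    {X' Y' T' Z' X Y T Z : M}
    (f₁' : X' ⟶ Y') (f₂' : X' ⟶ T') (g₁' : Y' ⟶ Z') (g₂' : T' ⟶ Z')
    (w' : f₁' ≫ g₁' = f₂' ≫ g₂')
    (f₁ : X ⟶ Y) (f₂ : X ⟶ T) (g₁ : Y ⟶ Z) (g₂ : T ⟶ Z)
    (w : f₁ ≫ g₁ = f₂ ≫ g₂)
    (vX : X' ⟶ X) (vY : Y' ⟶ Y) (vT : T' ⟶ T) (vZ : Z' ⟶ Z)
    (sq₁ : f₁' ≫ vY = vX ≫ f₁) (sq₂ : f₂' ≫ vT = vX ≫ f₂)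
    (sq₃ : g₁' ≫ vZ = vY ≫ g₁) (sq₄ : g₂' ≫ vZ = vT ≫ g₂)
    (htop : IsHomotopicalCellAttachment D f₁' f₂' g₁' g₂' w')
    (hbot : IsHomotopicalCellAttachment D f₁ f₂ g₁ g₂ w)
    (hvX : D.we vX) (hvY : D.we vY) (hvT : D.we vT) :
    D.we vZ ∧ Cofibrant D Z' ∧ Cofibrant D Z := by
  obtain ⟨hcX', hcY', hcT', hcZ', hcf₁', hcg₂', hwd'⟩ := htop
  obtain ⟨hcX, hcY, hcT, hcZ, hcf₁, hcg₂, hwd⟩ := hbot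
  refine ⟨?_, hcZ', hcZ⟩
  have wcube := cube D f₁' f₂' f₁ f₂ vX vY vT sq₁ sq₂ hcX' hcT' hcX hcT hcf₁' hcf₁ hvX hvY hvT
  have he : pushout.map f₁' f₂' f₁ f₂ vY vT vX sq₁ sq₂ ≫ pushout.desc g₁ g₂ w =
      pushout.desc g₁' g₂' w' ≫ vZ := by
    apply pushout.hom_ext <;> simp [sq₃, sq₄]
  have hcomp : D.we (pushout.desc g₁' g₂' w' ≫ vZ) := by
    rw [← he]; exact D.we_comp _ _ wcube hwd
  exact D.we_of_comp_left _ _ hwd' hcomp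

end PaperMorita
end
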